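/- arXiv:1001.0188 — 2 statements merged into one kernel-verified Lean document; each statement's English description precedes it below -/
import Mathlib

section
/- Sparsity bound for lasso (Theorem 3.3): Let c > 1, c̄ = (c+1)/(c−1). Suppose κ(c̄) > 0, λ > 0, λ ≥ c·n·‖S‖_∞, and let β̂ be a lasso estimator with m̂ = |supp(β̂) \ T| ≤ n. Set L_n := (2c̄/κ(c̄) + 3(c̄+1)·n·c_s/(λ√s))². Then for every natural number m with m > s·φ(m∧n)·2L_n, one has m̂ ≤ s·φ(m∧n)·L_n; consequently m̂ ≤ s·[min_{m∈M} φ(m∧n)]·L_n where M := {m ∈ ℕ : m > s·φ(m∧n)·2L_n}, whenever M is nonempty. -/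
open Finset MeasureTheory ProbabilityTheory

noncomputable section

/-- Prediction norm `‖δ‖_{2,n} = ((1/n) ∑_i (x_i'δ)²)^{1/2}`. -/
def predNorm (n p : ℕ) (x : Fin n → Fin p → ℝ) (δ : Fin p → ℝ) : ℝ :=
  Real.sqrt ((n : ℝ)⁻¹ * ∑ i, (∑ j, x i j * δ j) ^ 2)

/-- Least-squares criterion `Q̂(β) = (1/n) ∑_i (y_i - x_i'β)²`. -/
def Qls (n p : ℕ) (x : Fin n → Fin p → ℝ) (y : Fin n → ℝ) (β : Fin p → ℝ) : ℝ :=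
  (n : ℝ)⁻¹ * ∑ i, (y i - ∑ j, x i j * β j) ^ 2

/-- ℓ1-norm on `ℝ^p`. -/
def l1 {p : ℕ} (v : Fin p → ℝ) : ℝ := ∑ j, |v j|

/-- sup-norm (max-absolute-coordinate norm) on `ℝ^p`. -/
def supNorm {p : ℕ} (v : Fin p → ℝ) : ℝ := ⨆ j, |v j|

/-- `restr A δ` is `δ` with coordinates outside `A` set to `0`. -/
def restr {p : ℕ} (A : Finset (Fin p)) (δ : Fin p → ℝ) : Fin p → ℝ :=
  fun j => if j ∈ A then δ j else 0

/-- Support of a vector, as a finset. -/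
def suppF {p : ℕ} (v : Fin p → ℝ) : Finset (Fin p) :=
  Finset.univ.filter (fun j => v j ≠ 0)

/-- Restricted eigenvalue `κ(c̄)`. -/
def kappaRE (n p : ℕ) (x : Fin n → Fin p → ℝ) (T : Finset (Fin p)) (cbar : ℝ) : ℝ :=
  sInf {r : ℝ | ∃ δ : Fin p → ℝ, δ ≠ 0 ∧ l1 (restr Tᶜ δ) ≤ cbar * l1 (restr T δ) ∧
    r = Real.sqrt T.card * predNorm n p x δ / l1 (restr T δ)}

/-- Restricted sparse maximal eigenvalue `φ(m)`. -/
def phiRSE (n p : ℕ) (x : Fin n → Fin p → ℝ) (T : Finset (Fin p)) (m : ℕ) : ℝ :=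
  sSup {r : ℝ | ∃ δ : Fin p → ℝ, δ ≠ 0 ∧ (suppF (restr Tᶜ δ)).card ≤ m ∧
    r = (predNorm n p x δ) ^ 2 / ∑ j, δ j ^ 2}

/-- Restricted sparse minimal eigenvalue `κ̃(m)²`. -/
def kappaTildeSq (n p : ℕ) (x : Fin n → Fin p → ℝ) (T : Finset (Fin p)) (m : ℕ) : ℝ :=
  sInf {r : ℝ | ∃ δ : Fin p → ℝ, δ ≠ 0 ∧ (suppF (restr Tᶜ δ)).card ≤ m ∧
    r = (predNorm n p x δ) ^ 2 / ∑ j, δ j ^ 2}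

/-- The condition number `μ(m) = √φ(m)/κ̃(m)`. -/
def muCond (n p : ℕ) (x : Fin n → Fin p → ℝ) (T : Finset (Fin p)) (m : ℕ) : ℝ :=
  Real.sqrt (phiRSE n p x T m) / Real.sqrt (kappaTildeSq n p x T m)

namespace LassoAux



lemma cs {α : Type*} (s : Finset α) (a b : α → ℝ) :
    ∑ i ∈ s, a i * b i ≤ Real.sqrt (∑ i ∈ s, a i ^ 2) * Real.sqrt (∑ i ∈ s, b i ^ 2) := by
  have h := Finset.sum_mul_sq_le_sq_mul_sq s a b
  calc ∑ i ∈ s, a i * b i ≤ |∑ i ∈ s, a i * b i| := le_abs_self _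
    _ = Real.sqrt ((∑ i ∈ s, a i * b i) ^ 2) := (Real.sqrt_sq_eq_abs _).symm
    _ ≤ Real.sqrt ((∑ i ∈ s, a i ^ 2) * ∑ i ∈ s, b i ^ 2) := Real.sqrt_le_sqrt h
    _ = _ := Real.sqrt_mul (by positivity) _

lemma l2tri {α : Type*} (s : Finset α) (a b : α → ℝ) :
    Real.sqrt (∑ i ∈ s, (a i + b i) ^ 2) ≤
      Real.sqrt (∑ i ∈ s, a i ^ 2) + Real.sqrt (∑ i ∈ s, b i ^ 2) := by
  set A := ∑ i ∈ s, a i ^ 2 with hA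
  set B := ∑ i ∈ s, b i ^ 2 with hB
  have hA0 : 0 ≤ A := by positivity
  have hB0 : 0 ≤ B := by positivity
  have key : ∑ i ∈ s, (a i + b i) ^ 2 ≤ (Real.sqrt A + Real.sqrt B) ^ 2 := by
    have h1 : ∑ i ∈ s, (a i + b i) ^ 2 = A + 2 * ∑ i ∈ s, a i * b i + B := by
      rw [hA, hB, Finset.mul_sum, ← Finset.sum_add_distrib, ← Finset.sum_add_distrib]
      exact Finset.sum_congr rfl fun i _ => by ring
    have h2 := cs s a b
    have h3 : (Real.sqrt A + Real.sqrt B) ^ 2 = A + 2 * (Real.sqrt A * Real.sqrt B) + B := by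
      rw [add_sq, Real.sq_sqrt hA0, Real.sq_sqrt hB0]; ring
    rw [h1, h3]; linarith
  calc Real.sqrt (∑ i ∈ s, (a i + b i) ^ 2) ≤ Real.sqrt ((Real.sqrt A + Real.sqrt B) ^ 2) :=
        Real.sqrt_le_sqrt key
    _ = |Real.sqrt A + Real.sqrt B| := Real.sqrt_sq_eq_abs _
    _ = _ := abs_of_nonneg (by positivity)




lemma sum_sq_pos {p : ℕ} {δ : Fin p → ℝ} (h : δ ≠ 0) : 0 < ∑ j, δ j ^ 2 := by
  obtain ⟨j, hj⟩ := Function.ne_iff.mp h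
  exact Finset.sum_pos' (fun i _ => sq_nonneg _) ⟨j, Finset.mem_univ j, (sq_nonneg _).lt_of_ne (Ne.symm (pow_ne_zero 2 hj))⟩

lemma predNorm_sq (n p : ℕ) (x : Fin n → Fin p → ℝ) (δ : Fin p → ℝ) :
    (predNorm n p x δ) ^ 2 = (n : ℝ)⁻¹ * ∑ i, (∑ j, x i j * δ j) ^ 2 :=
  Real.sq_sqrt (by positivity)

lemma predNorm_nonneg (n p : ℕ) (x : Fin n → Fin p → ℝ) (δ : Fin p → ℝ) :
    0 ≤ predNorm n p x δ := Real.sqrt_nonneg _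

/-- basic bound `predNorm δ ^ 2 ≤ p * ∑ δ²` under normalization. -/
lemma predNorm_sq_le (n p : ℕ) (x : Fin n → Fin p → ℝ)
    (hx : ∀ j, (n : ℝ)⁻¹ * ∑ i, x i j ^ 2 = 1) (δ : Fin p → ℝ) :
    (predNorm n p x δ) ^ 2 ≤ (p : ℝ) * ∑ j, δ j ^ 2 := by
  rw [predNorm_sq]
  have h1 : ∀ i : Fin n, (∑ j, x i j * δ j) ^ 2 ≤ (∑ j, x i j ^ 2) * ∑ j, δ j ^ 2 :=
    fun i => Finset.sum_mul_sq_le_sq_mul_sq _ _ _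
  have h2 : (n : ℝ)⁻¹ * ∑ i, (∑ j, x i j * δ j) ^ 2 ≤
      (n : ℝ)⁻¹ * ∑ i, (∑ j, x i j ^ 2) * ∑ j, δ j ^ 2 := by
    apply mul_le_mul_of_nonneg_left (Finset.sum_le_sum fun i _ => h1 i) (by positivity)
  refine h2.trans (le_of_eq ?_)
  have e1 : (n:ℝ)⁻¹ * ∑ i, (∑ j, x i j ^ 2) * (∑ j, δ j ^ 2) =
      ((n:ℝ)⁻¹ * ∑ i, ∑ j, x i j ^ 2) * ∑ j, δ j ^ 2 := by
    rw [← Finset.sum_mul]; ring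
  have e2 : (n:ℝ)⁻¹ * ∑ i : Fin n, ∑ j : Fin p, x i j ^ 2 = (p : ℝ) := by
    rw [Finset.sum_comm, Finset.mul_sum]
    calc ∑ j : Fin p, (n : ℝ)⁻¹ * ∑ i, x i j ^ 2 = ∑ j : Fin p, (1 : ℝ) :=
          Finset.sum_congr rfl fun j _ => hx j
      _ = (p : ℝ) := by simp
  rw [e1, e2]

lemma phi_bddAbove (n p : ℕ) (x : Fin n → Fin p → ℝ)
    (hx : ∀ j, (n : ℝ)⁻¹ * ∑ i, x i j ^ 2 = 1) (T : Finset (Fin p)) (m : ℕ) :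
    ∀ r ∈ {r : ℝ | ∃ δ : Fin p → ℝ, δ ≠ 0 ∧ (suppF (restr Tᶜ δ)).card ≤ m ∧
      r = (predNorm n p x δ) ^ 2 / ∑ j, δ j ^ 2}, 0 ≤ r ∧ r ≤ (p : ℝ) := by
  rintro r ⟨δ, hδ, -, rfl⟩
  have hpos := sum_sq_pos hδ
  constructor
  · positivity
  · rw [div_le_iff₀ hpos]
    exact (predNorm_sq_le n p x hx δ).trans (le_of_eq (by ring))

lemma phi_nonempty (n p : ℕ) (x : Fin n → Fin p → ℝ) {T : Finset (Fin p)} (hT : T.Nonempty)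
    (m : ℕ) :
    Set.Nonempty {r : ℝ | ∃ δ : Fin p → ℝ, δ ≠ 0 ∧ (suppF (restr Tᶜ δ)).card ≤ m ∧
      r = (predNorm n p x δ) ^ 2 / ∑ j, δ j ^ 2} := by
  obtain ⟨j0, hj0⟩ := hT
  refine ⟨_, fun j => if j = j0 then 1 else 0, ?_, ?_, rfl⟩
  · intro h
    have := congrFun h j0
    simp at this
  · have : suppF (restr Tᶜ fun j => if j = j0 then (1:ℝ) else 0) = ∅ := by
      ext j
      simp only [suppF, restr, Finset.mem_filter, Finset.mem_univ, true_and,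
        Finset.notMem_empty, iff_false, not_not, Finset.mem_compl]
      by_cases hjT : j ∈ T
      · simp [hjT]
      · have hne : j ≠ j0 := fun h => hjT (h ▸ hj0)
        simp [hjT, hne]
    simp [this]

lemma phi_nonneg (n p : ℕ) (x : Fin n → Fin p → ℝ)
    (hx : ∀ j, (n : ℝ)⁻¹ * ∑ i, x i j ^ 2 = 1) {T : Finset (Fin p)} (hT : T.Nonempty) (m : ℕ) :
    0 ≤ phiRSE n p x T m := by
  obtain ⟨r, hr⟩ := phi_nonempty n p x hT m
  exact (phi_bddAbove n p x hx T m r hr).1.trans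
    (le_csSup ⟨(p:ℝ), fun y hy => (phi_bddAbove n p x hx T m y hy).2⟩ hr)

lemma sq_le_phi (n p : ℕ) (x : Fin n → Fin p → ℝ)
    (hx : ∀ j, (n : ℝ)⁻¹ * ∑ i, x i j ^ 2 = 1) (T : Finset (Fin p)) (m : ℕ)
    (δ : Fin p → ℝ) (hcard : (suppF (restr Tᶜ δ)).card ≤ m) :
    (predNorm n p x δ) ^ 2 ≤ phiRSE n p x T m * ∑ j, δ j ^ 2 := by
  by_cases hδ : δ = 0
  · subst hδ
    have : predNorm n p x 0 = 0 := by
      simp [predNorm]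
    rw [this]
    simp
  · have hpos := sum_sq_pos hδ
    have hmem : (predNorm n p x δ) ^ 2 / ∑ j, δ j ^ 2 ∈ {r : ℝ | ∃ δ : Fin p → ℝ, δ ≠ 0 ∧
        (suppF (restr Tᶜ δ)).card ≤ m ∧ r = (predNorm n p x δ) ^ 2 / ∑ j, δ j ^ 2} :=
      ⟨δ, hδ, hcard, rfl⟩
    have := le_csSup ⟨(p:ℝ), fun y hy => (phi_bddAbove n p x hx T m y hy).2⟩ hmem
    calc (predNorm n p x δ) ^ 2 = ((predNorm n p x δ) ^ 2 / ∑ j, δ j ^ 2) * ∑ j, δ j ^ 2 := by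
          field_simp
      _ ≤ phiRSE n p x T m * ∑ j, δ j ^ 2 := by
          apply mul_le_mul_of_nonneg_right this hpos.le

lemma phi_mono (n p : ℕ) (x : Fin n → Fin p → ℝ)
    (hx : ∀ j, (n : ℝ)⁻¹ * ∑ i, x i j ^ 2 = 1) {T : Finset (Fin p)} (hT : T.Nonempty)
    {m m' : ℕ} (h : m ≤ m') : phiRSE n p x T m ≤ phiRSE n p x T m' := by
  apply csSup_le_csSup ⟨(p:ℝ), fun y hy => (phi_bddAbove n p x hx T m' y hy).2⟩
    (phi_nonempty n p x hT m)
  rintro r ⟨δ, hδ, hc, rfl⟩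
  exact ⟨δ, hδ, hc.trans h, rfl⟩





lemma partition {p m : ℕ} : ∀ (k : ℕ) (A : Finset (Fin p)), A.card ≤ k * m →
    ∃ P : Fin k → Finset (Fin p), (∀ t, (P t).card ≤ m) ∧
      ∀ j, (Finset.univ.filter (fun t => j ∈ P t)).card = if j ∈ A then 1 else 0 := by
  intro k
  induction k with
  | zero =>
    intro A hA
    have : A = ∅ := Finset.card_eq_zero.mp (Nat.le_zero.mp (by simpa using hA))
    subst this
    exact ⟨fun t => ∅, fun t => Nat.zero_le _, fun j => by simp⟩
  | succ k ih =>
    intro A hA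
    obtain ⟨B, hBA, hB⟩ := Finset.exists_subset_card_eq (min_le_right m A.card)
    have hcard : (A \ B).card ≤ k * m := by
      rw [Finset.card_sdiff_of_subset hBA, hB]
      rcases le_total A.card m with h | h
      · simp [min_eq_right h]
      · rw [min_eq_left h]
        have : A.card ≤ k * m + m := by
          calc A.card ≤ (k+1) * m := hA
            _ = k * m + m := by ring
        omega
    obtain ⟨P', hP1, hP2⟩ := ih (A \ B) hcard
    refine ⟨Fin.cons B P', ?_, ?_⟩
    · intro t
      refine Fin.cases ?_ ?_ t
      · simpa [Fin.cons_zero] using (hB ▸ min_le_left m A.card)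
      · intro i; simpa using hP1 i
    · intro j
      rw [Finset.card_filter, Fin.sum_univ_succ]
      simp only [Fin.cons_zero, Fin.cons_succ]
      have h2 := hP2 j
      rw [Finset.card_filter] at h2
      rw [h2]
      by_cases hjB : j ∈ B
      · have hjA : j ∈ A := hBA hjB
        simp [hjB, hjA, Finset.mem_sdiff]
      · by_cases hjA : j ∈ A <;> simp [hjB, hjA, Finset.mem_sdiff]



lemma phi_sublinear (n p : ℕ) (x : Fin n → Fin p → ℝ)
    (hx : ∀ j, (n : ℝ)⁻¹ * ∑ i, x i j ^ 2 = 1) {T : Finset (Fin p)} (hT : T.Nonempty)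
    {k m : ℕ} (hk : 1 ≤ k) :
    phiRSE n p x T (k * m) ≤ (k : ℝ) * phiRSE n p x T m := by
  apply csSup_le (phi_nonempty n p x hT (k*m))
  rintro r ⟨δ, hδ, hc, rfl⟩
  have hpos := sum_sq_pos hδ
  have hk0 : (0:ℝ) < k := by exact_mod_cast hk
  set A := suppF (restr Tᶜ δ) with hAdef
  obtain ⟨P, hPcard, hPfil⟩ := partition k A hc
  set β : Fin p → ℝ := fun j => if j ∈ A then 0 else δ j with hβ
  set α : Fin k → Fin p → ℝ := fun t j => (k:ℝ)⁻¹ * β j + (if j ∈ P t then δ j else 0) with hα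
  -- auxiliary: sum over t of indicator
  have hind : ∀ (j : Fin p) (v : ℝ), ∑ t, (if j ∈ P t then v else 0) =
      (if j ∈ A then 1 else 0 : ℝ) * v := by
    intro j v
    rw [Finset.sum_ite, Finset.sum_const, Finset.sum_const_zero, add_zero, hPfil j]
    by_cases hjA : j ∈ A <;> simp [hjA]
  -- (i) decomposition
  have hdec : ∀ j, ∑ t, α t j = δ j := by
    intro j
    simp only [hα]
    rw [Finset.sum_add_distrib, Finset.sum_const, hind j (δ j)]
    by_cases hjA : j ∈ A
    · simp [hβ, hjA]
    · have hβj : β j = δ j := by simp [hβ, hjA]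
      rw [hβj, if_neg hjA, zero_mul, add_zero, nsmul_eq_mul, Finset.card_univ, Fintype.card_fin]
      field_simp
  -- (ii) sum of squares bound
  have hss : ∑ t, ∑ j, α t j ^ 2 ≤ ∑ j, δ j ^ 2 := by
    rw [Finset.sum_comm]
    apply Finset.sum_le_sum
    intro j _
    by_cases hjA : j ∈ A
    · have : ∀ t, α t j ^ 2 = (if j ∈ P t then δ j ^ 2 else 0) := by
        intro t
        simp only [hα, hβ, hjA, if_pos, mul_zero, zero_add]
        by_cases h : j ∈ P t <;> simp [h]
      rw [Finset.sum_congr rfl fun t _ => this t, hind j (δ j ^ 2)]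
      simp [hjA]
    · have : ∀ t, α t j ^ 2 = ((k:ℝ)⁻¹ * δ j) ^ 2 := by
        intro t
        have hPj : j ∉ P t := by
          intro h
          have := hPfil j
          rw [if_neg hjA, Finset.card_eq_zero] at this
          have : t ∈ Finset.univ.filter (fun t => j ∈ P t) := by simp [h]
          simp [‹Finset.univ.filter (fun t => j ∈ P t) = ∅›] at this
        simp [hα, hβ, hjA, hPj]
      rw [Finset.sum_congr rfl fun t _ => this t, Finset.sum_const, nsmul_eq_mul,
        Finset.card_univ, Fintype.card_fin]
      have he : (k:ℝ) * ((k:ℝ)⁻¹ * δ j) ^ 2 = (k:ℝ)⁻¹ * δ j ^ 2 := by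
        field_simp
      rw [he]
      have hkinv : (k:ℝ)⁻¹ ≤ 1 := by
        have h1 := inv_mul_cancel₀ (ne_of_gt hk0)
        have h2 : (1:ℝ) ≤ (k:ℝ) := by exact_mod_cast hk
        nlinarith [inv_nonneg.mpr hk0.le]
      nlinarith [sq_nonneg (δ j), inv_nonneg.mpr hk0.le]
  -- (iii) support of each α t
  have hsupp : ∀ t, (suppF (restr Tᶜ (α t))).card ≤ m := by
    intro t
    refine le_trans (Finset.card_le_card ?_) (hPcard t)
    intro j hj
    simp only [suppF, restr, Finset.mem_filter, Finset.mem_univ, true_and, Finset.mem_filter_univ] at hj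
    by_contra hPj
    apply (Finset.mem_filter.mp hj).2
    by_cases hjT : j ∈ Tᶜ
    · rw [if_pos hjT]
      have hβj : β j = 0 := by
        by_cases hjA : j ∈ A
        · simp [hβ, hjA]
        · -- j ∈ Tᶜ and δ j ≠ 0 would mean j ∈ A
          simp only [hβ, if_neg hjA]
          by_contra hδj
          apply hjA
          simp only [hAdef, suppF, restr, Finset.mem_filter, Finset.mem_univ, true_and]
          refine Finset.mem_filter.mpr ⟨Finset.mem_univ j, ?_⟩
          rw [if_pos hjT]
          exact hδj
      simp [hα, hβj, hPj]
    · rw [if_neg hjT]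
  -- (iv) predNorm bound
  have hP2 : (predNorm n p x δ) ^ 2 ≤ (k:ℝ) * ∑ t, (predNorm n p x (α t)) ^ 2 := by
    rw [predNorm_sq]
    have key : ∀ i : Fin n, (∑ j, x i j * δ j) ^ 2 ≤
        (k:ℝ) * ∑ t, (∑ j, x i j * α t j) ^ 2 := by
      intro i
      have e : ∑ j, x i j * δ j = ∑ t, ∑ j, x i j * α t j := by
        rw [Finset.sum_comm]
        apply Finset.sum_congr rfl
        intro j _
        rw [← Finset.mul_sum, hdec j]
      rw [e]
      have := sq_sum_le_card_mul_sum_sq (s := (Finset.univ : Finset (Fin k)))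
        (f := fun t => ∑ j, x i j * α t j)
      simpa using this
    calc (n : ℝ)⁻¹ * ∑ i, (∑ j, x i j * δ j) ^ 2
        ≤ (n : ℝ)⁻¹ * ∑ i, ((k:ℝ) * ∑ t, (∑ j, x i j * α t j) ^ 2) := by
          apply mul_le_mul_of_nonneg_left (Finset.sum_le_sum fun i _ => key i) (by positivity)
      _ = (k:ℝ) * ∑ t, (predNorm n p x (α t)) ^ 2 := by
          simp only [predNorm_sq, Finset.mul_sum]
          rw [Finset.sum_comm]
          exact Finset.sum_congr rfl fun t _ => Finset.sum_congr rfl fun i _ => by ring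
  have hchain : (predNorm n p x δ) ^ 2 ≤ (k:ℝ) * phiRSE n p x T m * ∑ j, δ j ^ 2 := by
    refine hP2.trans ?_
    have h1 : ∑ t, (predNorm n p x (α t)) ^ 2 ≤ phiRSE n p x T m * ∑ t, ∑ j, α t j ^ 2 := by
      rw [Finset.mul_sum]
      exact Finset.sum_le_sum fun t _ => sq_le_phi n p x hx T m (α t) (hsupp t)
    have h2 : phiRSE n p x T m * ∑ t, ∑ j, α t j ^ 2 ≤ phiRSE n p x T m * ∑ j, δ j ^ 2 :=
      mul_le_mul_of_nonneg_left hss (phi_nonneg n p x hx hT m)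
    calc (k:ℝ) * ∑ t, (predNorm n p x (α t)) ^ 2 ≤
        (k:ℝ) * (phiRSE n p x T m * ∑ j, δ j ^ 2) := by
          apply mul_le_mul_of_nonneg_left (h1.trans h2) hk0.le
      _ = (k:ℝ) * phiRSE n p x T m * ∑ j, δ j ^ 2 := by ring
  rw [div_le_iff₀ hpos]
  exact hchain

lemma nCS (n : ℕ) (a b : Fin n → ℝ) :
    (n:ℝ)⁻¹ * ∑ i, a i * b i ≤
      Real.sqrt ((n:ℝ)⁻¹ * ∑ i, a i ^ 2) * Real.sqrt ((n:ℝ)⁻¹ * ∑ i, b i ^ 2) := by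
  have h0 : (0:ℝ) ≤ (n:ℝ)⁻¹ := by positivity
  rw [Real.sqrt_mul h0, Real.sqrt_mul h0]
  calc (n:ℝ)⁻¹ * ∑ i, a i * b i
      ≤ (n:ℝ)⁻¹ * (Real.sqrt (∑ i, a i ^ 2) * Real.sqrt (∑ i, b i ^ 2)) :=
        mul_le_mul_of_nonneg_left (cs _ _ _) h0
    _ = (Real.sqrt (n:ℝ)⁻¹ * Real.sqrt (n:ℝ)⁻¹) *
        (Real.sqrt (∑ i, a i ^ 2) * Real.sqrt (∑ i, b i ^ 2)) := by
        rw [Real.mul_self_sqrt h0]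
    _ = _ := by ring

lemma nTri (n : ℕ) (a b : Fin n → ℝ) :
    Real.sqrt ((n:ℝ)⁻¹ * ∑ i, (a i + b i) ^ 2) ≤
      Real.sqrt ((n:ℝ)⁻¹ * ∑ i, a i ^ 2) + Real.sqrt ((n:ℝ)⁻¹ * ∑ i, b i ^ 2) := by
  have h0 : (0:ℝ) ≤ (n:ℝ)⁻¹ := by positivity
  rw [Real.sqrt_mul h0, Real.sqrt_mul h0, Real.sqrt_mul h0, ← mul_add]
  exact mul_le_mul_of_nonneg_left (l2tri _ _ _) (Real.sqrt_nonneg _)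

lemma expandSq (n : ℕ) (a b : Fin n → ℝ) (t : ℝ) :
    (n:ℝ)⁻¹ * ∑ i, (a i - t * b i) ^ 2 =
      (n:ℝ)⁻¹ * ∑ i, a i ^ 2 - 2 * t * ((n:ℝ)⁻¹ * ∑ i, b i * a i)
        + t ^ 2 * ((n:ℝ)⁻¹ * ∑ i, b i ^ 2) := by
  have h : ∀ i, (a i - t * b i) ^ 2 = a i ^ 2 - 2 * t * (b i * a i) + t ^ 2 * b i ^ 2 :=
    fun i => by ring
  rw [Finset.sum_congr rfl fun i _ => h i, Finset.sum_add_distrib, Finset.sum_sub_distrib,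
    ← Finset.mul_sum, ← Finset.mul_sum]
  ring

lemma kkt (n p : ℕ) (hn : 0 < n) (x : Fin n → Fin p → ℝ) (y : Fin n → ℝ)
    (hx : ∀ j, (n : ℝ)⁻¹ * ∑ i, x i j ^ 2 = 1)
    (lam : ℝ) (hlam : 0 < lam) (βhat : Fin p → ℝ)
    (hβhat : ∀ β : Fin p → ℝ,
      Qls n p x y βhat + lam / n * l1 βhat ≤ Qls n p x y β + lam / n * l1 β)
    (j : Fin p) (hj : βhat j ≠ 0) :
    |2 * ((n:ℝ)⁻¹ * ∑ i, x i j * (y i - ∑ j', x i j' * βhat j'))| = lam / n := by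
  set g : ℝ := (n:ℝ)⁻¹ * ∑ i, x i j * (y i - ∑ j', x i j' * βhat j') with hg
  set σ : ℝ := if 0 < βhat j then 1 else -1 with hσ
  -- key inequality for small t
  have key : ∀ t : ℝ, |t| ≤ |βhat j| → 0 ≤ t * (-2 * g + lam / n * σ) + t ^ 2 := by
    intro t ht
    have hQ : Qls n p x y (Function.update βhat j (βhat j + t)) =
        Qls n p x y βhat - 2 * t * g + t ^ 2 := by
      have hup : ∀ i, ∑ j', x i j' * (Function.update βhat j (βhat j + t)) j' =
          (∑ j', x i j' * βhat j') + t * x i j := by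
        intro i
        have hpt : ∀ j', (Function.update βhat j (βhat j + t)) j' =
            βhat j' + (if j' = j then t else 0) := by
          intro j'
          by_cases h : j' = j
          · subst h; simp
          · simp [Function.update_of_ne h, h]
        rw [Finset.sum_congr rfl fun j' _ => by rw [hpt j']]
        have : ∀ j', x i j' * (βhat j' + if j' = j then t else 0) =
            x i j' * βhat j' + (if j' = j then x i j' * t else 0) := by
          intro j'
          by_cases h : j' = j <;> simp [h] <;> ring
        rw [Finset.sum_congr rfl fun j' _ => this j', Finset.sum_add_distrib,
          Finset.sum_ite_eq' Finset.univ j (fun j' => x i j' * t)]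
        simp [mul_comm]
      unfold Qls
      have : ∀ i, y i - ∑ j', x i j' * (Function.update βhat j (βhat j + t)) j' =
          (y i - ∑ j', x i j' * βhat j') - t * x i j := by
        intro i; rw [hup i]; ring
      rw [Finset.sum_congr rfl fun i _ => by rw [this i]]
      rw [expandSq n (fun i => y i - ∑ j', x i j' * βhat j') (fun i => x i j) t, hx j, hg]
      ring
    have hl1 : l1 (Function.update βhat j (βhat j + t)) =
        l1 βhat - |βhat j| + |βhat j + t| := by
      unfold l1
      have habs : (fun j' => |Function.update βhat j (βhat j + t) j'|) =
          Function.update (fun j' => |βhat j'|) j |βhat j + t| := by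
        funext j'
        by_cases h : j' = j
        · subst h; simp
        · simp [Function.update_of_ne h]
      rw [Finset.sum_congr rfl fun j' _ => congrFun habs j']
      rw [Finset.sum_update_of_mem (Finset.mem_univ j)]
      have : ∑ j' : Fin p, |βhat j'| = |βhat j| + ∑ j' ∈ Finset.univ \ {j}, |βhat j'| := by
        rw [Finset.sum_eq_sum_sdiff_singleton_add (Finset.mem_univ j) (fun j' => |βhat j'|)]
        ring
      rw [this]; ring
    have habs2 : |βhat j + t| = |βhat j| + σ * t := by
      rcases lt_or_gt_of_ne hj with hneg | hpos
      · have hσ' : σ = -1 := by rw [hσ, if_neg (not_lt.mpr hneg.le)]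
        have h1 : βhat j + t ≤ 0 := by
          have := abs_le.mp ht
          rw [abs_of_nonpos hneg.le] at this
          linarith [this.2]
        rw [abs_of_nonpos h1, abs_of_nonpos hneg.le, hσ']; ring
      · have hσ' : σ = 1 := by rw [hσ, if_pos hpos]
        have h1 : 0 ≤ βhat j + t := by
          have := abs_le.mp ht
          rw [abs_of_pos hpos] at this
          linarith [this.1]
        rw [abs_of_nonneg h1, abs_of_pos hpos, hσ']; ring
    have h := hβhat (Function.update βhat j (βhat j + t))
    rw [hQ, hl1, habs2] at h
    have hn' : (0:ℝ) < n := by exact_mod_cast hn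
    have : 0 ≤ -2 * t * g + t ^ 2 + lam / n * (σ * t) := by linarith
    nlinarith [this]
  -- conclude -2g + lam/n σ = 0
  set h : ℝ := -2 * g + lam / n * σ with hh
  have hzero : h = 0 := by
    by_contra hne
    have hb : 0 < |βhat j| := abs_pos.mpr hj
    have hhpos : 0 < |h| := abs_pos.mpr hne
    set t0 : ℝ := min |βhat j| (|h| / 2) with ht0
    have ht0pos : 0 < t0 := lt_min hb (by positivity)
    set t : ℝ := if 0 < h then -t0 else t0 with ht
    have habs : |t| = t0 := by
      rw [ht]; split <;> simp [abs_of_pos ht0pos, abs_of_neg (neg_neg_iff_pos.mpr ht0pos)]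
    have hth : t * h = -(t0 * |h|) := by
      rw [ht]
      rcases lt_trichotomy h 0 with h1 | h1 | h1
      · rw [if_neg (not_lt.mpr h1.le), abs_of_neg h1]; ring
      · exact absurd h1 hne
      · rw [if_pos h1, abs_of_pos h1]; ring
    have := key t (by rw [habs]; exact min_le_left _ _)
    have ht2 : t ^ 2 ≤ t0 * (|h| / 2) := by
      have : t ^ 2 = t0 ^ 2 := by rw [← sq_abs, habs]
      rw [this, sq]
      exact mul_le_mul_of_nonneg_left (min_le_right _ _) ht0pos.le
    nlinarith [this, hth, ht2, mul_pos ht0pos hhpos]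
  -- |2g| = lam/n
  have h2g : 2 * g = lam / n * σ := by rw [hh] at hzero; linarith [hzero]
  rw [h2g, abs_mul]
  have hσabs : |σ| = 1 := by
    rw [hσ]; split <;> simp
  rw [hσabs, mul_one, abs_of_pos (by positivity)]

lemma l1_restr_eq {p : ℕ} (A : Finset (Fin p)) (δ : Fin p → ℝ) :
    l1 (restr A δ) = ∑ j ∈ A, |δ j| := by
  unfold l1 restr
  rw [Finset.sum_congr rfl (fun j _ => show |if j ∈ A then δ j else 0| =
    if j ∈ A then |δ j| else 0 by split <;> simp)]
  rw [Finset.sum_ite_mem, Finset.univ_inter]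

lemma l1_nonneg {p : ℕ} (v : Fin p → ℝ) : 0 ≤ l1 v :=
  Finset.sum_nonneg fun j _ => abs_nonneg _

lemma l1_eq_zero {p : ℕ} {v : Fin p → ℝ} (h : l1 v = 0) : v = 0 := by
  funext j
  have := (Finset.sum_eq_zero_iff_of_nonneg (fun j _ => abs_nonneg (v j))).mp h j
    (Finset.mem_univ j)
  simpa using this

lemma kappa_nonneg_mem (n p : ℕ) (x : Fin n → Fin p → ℝ) (T : Finset (Fin p)) (cbar : ℝ) :
    BddBelow {r : ℝ | ∃ δ : Fin p → ℝ, δ ≠ 0 ∧ l1 (restr Tᶜ δ) ≤ cbar * l1 (restr T δ) ∧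
      r = Real.sqrt T.card * predNorm n p x δ / l1 (restr T δ)} := by
  refine ⟨0, ?_⟩
  rintro r ⟨δ, -, -, rfl⟩
  exact div_nonneg (mul_nonneg (Real.sqrt_nonneg _) (predNorm_nonneg n p x δ))
    (l1_nonneg _)

set_option maxHeartbeats 2000000 in
lemma rate (n p : ℕ) (hn : 0 < n) (x : Fin n → Fin p → ℝ) (y f : Fin n → ℝ)
    (β0 : Fin p → ℝ) (T : Finset (Fin p)) (hT : T = suppF β0)
    (s : ℕ) (hs : s = T.card)
    (cs : ℝ) (hcs : cs = Real.sqrt ((n : ℝ)⁻¹ * ∑ i, (f i - ∑ j, x i j * β0 j) ^ 2))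
    (c : ℝ) (hc : 1 < c) (cbar : ℝ) (hcbar : cbar = (c + 1) / (c - 1))
    (hκ : 0 < kappaRE n p x T cbar)
    (lam : ℝ) (hlam : 0 < lam)
    (hS : ∀ j, |(2 / n : ℝ) * ∑ i, (y i - f i) * x i j| ≤ lam / (c * n))
    (βhat : Fin p → ℝ)
    (hopt : Qls n p x y βhat + lam / n * l1 βhat ≤ Qls n p x y β0 + lam / n * l1 β0) :
    predNorm n p x (fun j => βhat j - β0 j) ≤
      (1 + 1/c) * lam * Real.sqrt s / (n * kappaRE n p x T cbar) + 2 * cs := by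
  have hn' : (0:ℝ) < n := by exact_mod_cast hn
  have hc0 : (0:ℝ) < c := lt_trans one_pos hc
  set δ : Fin p → ℝ := fun j => βhat j - β0 j with hδdef
  set D : ℝ := predNorm n p x δ with hDdef
  set κ : ℝ := kappaRE n p x T cbar with hκdef
  have hD0 : 0 ≤ D := predNorm_nonneg n p x δ
  have hcs0 : 0 ≤ cs := hcs ▸ Real.sqrt_nonneg _
  have hRHS0 : 0 ≤ (1 + 1/c) * lam * Real.sqrt s / (n * κ) + 2 * cs := by
    have h1 : 0 ≤ (1 + 1/c) * lam * Real.sqrt s / (n * κ) := by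
      apply div_nonneg
      · apply mul_nonneg (mul_nonneg (by positivity) hlam.le) (Real.sqrt_nonneg _)
      · exact mul_nonneg hn'.le hκ.le
    linarith
  set b : Fin n → ℝ := fun i => ∑ j, x i j * δ j with hbdef
  set a : Fin n → ℝ := fun i => y i - ∑ j, x i j * β0 j with hadef
  -- Q difference
  have hbi : ∀ i, y i - ∑ j, x i j * βhat j = a i - 1 * b i := by
    intro i
    simp only [hadef, hbdef, hδdef]
    rw [show (∑ j, x i j * (βhat j - β0 j)) = (∑ j, x i j * βhat j) - ∑ j, x i j * β0 j from by
      rw [← Finset.sum_sub_distrib]; exact Finset.sum_congr rfl fun j _ => by ring]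
    ring
  have hQhat : Qls n p x y βhat = Qls n p x y β0 -
      2 * ((n:ℝ)⁻¹ * ∑ i, b i * a i) + D ^ 2 := by
    unfold Qls
    rw [Finset.sum_congr rfl fun i _ => by rw [hbi i]]
    rw [expandSq n a b 1]
    rw [hDdef, predNorm_sq]
    simp only [hadef, hbdef]
    ring
  have hmaster0 : D ^ 2 ≤ 2 * ((n:ℝ)⁻¹ * ∑ i, b i * a i) +
      lam / n * (l1 β0 - l1 βhat) := by
    have := hopt
    rw [hQhat] at this
    linarith
  -- split a = ε + r
  set ε : Fin n → ℝ := fun i => y i - f i with hεdef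
  set rr : Fin n → ℝ := fun i => f i - ∑ j, x i j * β0 j with hrrdef
  have har : ∀ i, a i = ε i + rr i := by intro i; simp only [hadef, hεdef, hrrdef]; ring
  have hsplitba : (n:ℝ)⁻¹ * ∑ i, b i * a i =
      (n:ℝ)⁻¹ * ∑ i, b i * ε i + (n:ℝ)⁻¹ * ∑ i, b i * rr i := by
    rw [← mul_add, ← Finset.sum_add_distrib]
    congr 1
    exact Finset.sum_congr rfl fun i _ => by rw [har i]; ring
  -- score term
  set t1 : ℝ := l1 (restr T δ) with ht1def
  set t2 : ℝ := l1 (restr Tᶜ δ) with ht2def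
  have ht1nn : 0 ≤ t1 := l1_nonneg _
  have ht2nn : 0 ≤ t2 := l1_nonneg _
  have hl1split : l1 δ = t1 + t2 := by
    rw [ht1def, ht2def, l1_restr_eq, l1_restr_eq]
    exact (Finset.sum_add_sum_compl T _).symm
  have hscore : 2 * ((n:ℝ)⁻¹ * ∑ i, b i * ε i) ≤ lam / (c * n) * (t1 + t2) := by
    have e1 : 2 * ((n:ℝ)⁻¹ * ∑ i, b i * ε i) =
        ∑ j, ((2 / n : ℝ) * ∑ i, ε i * x i j) * δ j := by
      have l : ∑ i, b i * ε i = ∑ j, (∑ i, ε i * x i j) * δ j := by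
        simp only [hbdef]
        calc ∑ i, (∑ j, x i j * δ j) * ε i = ∑ i, ∑ j, x i j * δ j * ε i :=
              Finset.sum_congr rfl fun i _ => Finset.sum_mul _ _ _
          _ = ∑ j, ∑ i, x i j * δ j * ε i := Finset.sum_comm
          _ = ∑ j, (∑ i, ε i * x i j) * δ j := by
              refine Finset.sum_congr rfl fun j _ => ?_
              rw [Finset.sum_mul]
              exact Finset.sum_congr rfl fun i _ => by ring
      rw [l, Finset.mul_sum, Finset.mul_sum]
      refine Finset.sum_congr rfl fun j _ => ?_
      rw [div_eq_mul_inv]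
      ring
    rw [e1, ← hl1split]
    calc ∑ j, ((2 / n : ℝ) * ∑ i, ε i * x i j) * δ j
        ≤ ∑ j, lam / (c * n) * |δ j| := by
          apply Finset.sum_le_sum
          intro j _
          calc ((2 / n : ℝ) * ∑ i, ε i * x i j) * δ j
              ≤ |((2 / n : ℝ) * ∑ i, ε i * x i j) * δ j| := le_abs_self _
            _ = |(2 / n : ℝ) * ∑ i, ε i * x i j| * |δ j| := abs_mul _ _
            _ ≤ lam / (c * n) * |δ j| := by
                apply mul_le_mul_of_nonneg_right ?_ (abs_nonneg _)
                simpa only [hεdef] using hS j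
      _ = lam / (c * n) * l1 δ := by rw [l1, ← Finset.mul_sum]
  -- approximation error term
  have happrox : 2 * ((n:ℝ)⁻¹ * ∑ i, b i * rr i) ≤ 2 * cs * D := by
    have h1 : (n:ℝ)⁻¹ * ∑ i, b i * rr i ≤ cs * D := by
      have := nCS n rr b
      rw [Finset.sum_congr rfl fun i _ => mul_comm (rr i) (b i)] at this
      refine this.trans (le_of_eq ?_)
      rw [hcs, hDdef]
      rfl
    linarith
  -- l1 comparison
  have hl1comp : l1 β0 - l1 βhat ≤ t1 - t2 := by
    have e0 : ∀ v : Fin p → ℝ, l1 v = ∑ j ∈ T, |v j| + ∑ j ∈ Tᶜ, |v j| :=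
      fun v => (Finset.sum_add_sum_compl T _).symm
    rw [e0 β0, e0 βhat, ht1def, ht2def, l1_restr_eq, l1_restr_eq]
    have hTb : ∑ j ∈ T, |β0 j| - ∑ j ∈ T, |βhat j| ≤ ∑ j ∈ T, |δ j| := by
      rw [← Finset.sum_sub_distrib]
      apply Finset.sum_le_sum
      intro j _
      calc |β0 j| - |βhat j| ≤ |β0 j - βhat j| := abs_sub_abs_le_abs_sub _ _
        _ = |δ j| := by rw [hδdef]; rw [← abs_neg]; congr 1; ring
    have hTc : ∀ j ∈ Tᶜ, |β0 j| - |βhat j| = -|δ j| := by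
      intro j hj
      have hβ0j : β0 j = 0 := by
        rw [Finset.mem_compl, hT] at hj
        simpa [suppF] using hj
      simp only [hδdef, hβ0j]
      simp
    have : ∑ j ∈ Tᶜ, |β0 j| - ∑ j ∈ Tᶜ, |βhat j| = -∑ j ∈ Tᶜ, |δ j| := by
      rw [← Finset.sum_sub_distrib, ← Finset.sum_neg_distrib]
      exact Finset.sum_congr rfl hTc
    linarith [hTb, this.le, this.ge]
  -- master inequality
  have hmaster : D ^ 2 ≤ lam / n * ((1 + 1/c) * t1 - (1 - 1/c) * t2) + 2 * cs * D := by
    have heq : lam / (c*n) * (t1 + t2) + lam / n * (t1 - t2) =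
        lam / n * ((1 + 1/c) * t1 - (1 - 1/c) * t2) := by
      field_simp
      ring
    have h1 : lam / n * (l1 β0 - l1 βhat) ≤ lam / n * (t1 - t2) :=
      mul_le_mul_of_nonneg_left hl1comp (by positivity)
    rw [hsplitba] at hmaster0
    linarith [hscore, happrox, hmaster0, h1, heq]
  clear_value t2 t1 rr ε b a D δ
  have hoc : (0:ℝ) ≤ 1 - 1/c := by
    rw [sub_nonneg, div_le_one hc0]
    linarith
  by_cases hcone : t2 ≤ cbar * t1
  · -- cone case
    by_cases hδ0 : δ = 0
    · have : D = 0 := by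
        rw [hDdef, hδ0]
        simp [predNorm]
      rw [this]; exact hRHS0
    · have ht1pos : 0 < t1 := by
        rcases lt_or_eq_of_le ht1nn with h | h
        · exact h
        · exfalso
          have ht20 : t2 = 0 := by
            rw [← h, mul_zero] at hcone
            linarith [ht2nn]
          apply hδ0
          apply l1_eq_zero
          rw [hl1split, ← h, ht20]; ring
      have hκle : κ ≤ Real.sqrt T.card * D / t1 := by
        apply csInf_le (kappa_nonneg_mem n p x T cbar)
        exact ⟨δ, hδ0, by rw [← ht1def, ← ht2def]; exact hcone, by rw [← ht1def, ← hDdef]⟩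
      clear_value κ
      have ht1le : t1 ≤ Real.sqrt s * D / κ := by
        rw [hs, le_div_iff₀ hκ]
        rw [le_div_iff₀ ht1pos] at hκle
        nlinarith [hκle]
      have hln : 0 ≤ lam / (n:ℝ) := le_of_lt (div_pos hlam hn')
      have hop : (0:ℝ) ≤ 1 + 1/c := by positivity
      have hmaster2 : D ^ 2 ≤ lam / n * ((1 + 1/c) * t1) + 2 * cs * D := by
        have hB : 0 ≤ (1 - 1/c) * t2 := mul_nonneg hoc ht2nn
        have hmono : lam / n * ((1 + 1/c) * t1 - (1 - 1/c) * t2) ≤ lam / n * ((1 + 1/c) * t1) :=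
          mul_le_mul_of_nonneg_left (by linarith) hln
        linarith [hmaster]
      have hfinal : D ^ 2 ≤ ((1 + 1/c) * lam * Real.sqrt s / (n * κ) + 2 * cs) * D := by
        have h1 : lam / n * ((1 + 1/c) * t1) ≤ lam / n * ((1 + 1/c) * (Real.sqrt s * D / κ)) :=
          mul_le_mul_of_nonneg_left (mul_le_mul_of_nonneg_left ht1le hop) hln
        have h2 : lam / n * ((1 + 1/c) * (Real.sqrt s * D / κ)) =
            (1 + 1/c) * lam * Real.sqrt s / (n * κ) * D := by
          field_simp
        linarith [hmaster2, h1]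
      rcases eq_or_lt_of_le hD0 with h | h
      · rw [← h]; exact hRHS0
      · have := hfinal
        rw [sq] at this
        exact le_of_mul_le_mul_right (by linarith [this]) h
  · -- non-cone case
    clear_value κ
    push_neg at hcone
    have hcne : c ≠ 0 := ne_of_gt hc0
    have hc1 : c - 1 ≠ 0 := by intro h'; rw [sub_eq_zero] at h'; exact absurd h' (by linarith)
    have hid : (1 + 1/c) = (1 - 1/c) * cbar := by
      rw [hcbar]
      field_simp
    have hkey : (1 + 1/c) * t1 - (1 - 1/c) * t2 ≤ 0 := by
      rw [hid]
      have : (1 - 1/c) * (cbar * t1) ≤ (1 - 1/c) * t2 :=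
        mul_le_mul_of_nonneg_left hcone.le hoc
      nlinarith [this]
    have : D ^ 2 ≤ 2 * cs * D := by
      have h1 : lam / n * ((1 + 1/c) * t1 - (1 - 1/c) * t2) ≤ 0 :=
        mul_nonpos_of_nonneg_of_nonpos (le_of_lt (div_pos hlam hn')) hkey
      linarith [hmaster]
    have hD2cs : D ≤ 2 * cs := by
      rcases eq_or_lt_of_le hD0 with h | h
      · rw [← h]; linarith [hcs0]
      · rw [sq] at this
        exact le_of_mul_le_mul_right (by linarith [this]) h
    have h1 : 0 ≤ (1 + 1/c) * lam * Real.sqrt s / (n * κ) := by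
      apply div_nonneg (mul_nonneg (mul_nonneg (by positivity) hlam.le) (Real.sqrt_nonneg _))
        (mul_nonneg hn'.le hκ.le)
    linarith

end LassoAux

set_option maxHeartbeats 4000000 in
/-- Theorem 3.3: sparsity bound for lasso under data-driven penalty. -/
theorem lasso_sparsity_bound
    (n p : ℕ) (hn : 0 < n) (hp : 0 < p)
    (x : Fin n → Fin p → ℝ) (y f : Fin n → ℝ)
    (hx : ∀ j, (n : ℝ)⁻¹ * ∑ i, x i j ^ 2 = 1)
    (β0 : Fin p → ℝ) (T : Finset (Fin p)) (hT : T = suppF β0)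
    (s : ℕ) (hs : s = T.card) (hs1 : 1 ≤ s)
    (cs : ℝ) (hcs : cs = Real.sqrt ((n : ℝ)⁻¹ * ∑ i, (f i - ∑ j, x i j * β0 j) ^ 2))
    (c : ℝ) (hc : 1 < c) (cbar : ℝ) (hcbar : cbar = (c + 1) / (c - 1))
    (hκ : 0 < kappaRE n p x T cbar)
    (S : Fin p → ℝ) (hS : S = fun j => (2 / n : ℝ) * ∑ i, (y i - f i) * x i j)
    (lam : ℝ) (hlam : 0 < lam) (hlamS : c * n * supNorm S ≤ lam)
    (βhat : Fin p → ℝ)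
    (hβhat : ∀ β : Fin p → ℝ,
      Qls n p x y βhat + lam / n * l1 βhat ≤ Qls n p x y β + lam / n * l1 β)
    (mhat : ℕ) (hmhat : mhat = (suppF βhat \ T).card) (hmhatn : mhat ≤ n)
    (Ln : ℝ) (hLn : Ln = (2 * cbar / kappaRE n p x T cbar +
      3 * (cbar + 1) * n * cs / (lam * Real.sqrt s)) ^ 2)
    (M : Set ℕ) (hM : M = {m : ℕ | (s : ℝ) * phiRSE n p x T (min m n) * (2 * Ln) < m}) :
    (∀ m ∈ M, (mhat : ℝ) ≤ s * phiRSE n p x T (min m n) * Ln) ∧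
      (M.Nonempty →
        (mhat : ℝ) ≤ s * sInf {r : ℝ | ∃ m ∈ M, r = phiRSE n p x T (min m n)} * Ln) := by
  have hn' : (0:ℝ) < n := by exact_mod_cast hn
  have hc0 : (0:ℝ) < c := lt_trans one_pos hc
  have hcne : c ≠ 0 := ne_of_gt hc0
  have hc1 : c - 1 ≠ 0 := by intro h'; rw [sub_eq_zero] at h'; exact absurd h' (by linarith)
  have hTne : T.Nonempty := Finset.card_pos.mp (by omega)
  have hcs0 : 0 ≤ cs := hcs ▸ Real.sqrt_nonneg _
  have hLn0 : 0 ≤ Ln := hLn ▸ sq_nonneg _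
  have hs0 : (0:ℝ) < s := by exact_mod_cast (by omega : 0 < s)
  have hsqs : (0:ℝ) < Real.sqrt s := Real.sqrt_pos.mpr hs0
  have hcbar0 : 0 < cbar := by
    rw [hcbar]; apply div_pos <;> linarith
  -- coordinatewise score bound
  have hSb : ∀ j, |(2 / n : ℝ) * ∑ i, (y i - f i) * x i j| ≤ lam / (c * n) := by
    intro j
    have h1 : |S j| ≤ supNorm S := le_ciSup (Set.finite_range fun j => |S j|).bddAbove j
    have h2 : supNorm S ≤ lam / (c * n) := by
      rw [le_div_iff₀ (mul_pos hc0 hn')]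
      calc supNorm S * (c * n) = c * n * supNorm S := by ring
        _ ≤ lam := hlamS
    have h3 := h1.trans h2
    rw [hS] at h3
    simpa using h3
  have hrate := LassoAux.rate n p hn x y f β0 T hT s hs cs hcs c hc cbar hcbar hκ
    lam hlam hSb βhat (hβhat β0)
  set δ : Fin p → ℝ := fun j => βhat j - β0 j with hδdef
  set Dr : ℝ := predNorm n p x δ with hDrdef
  set κ : ℝ := kappaRE n p x T cbar with hκdef
  have hDr0 : 0 ≤ Dr := Real.sqrt_nonneg _
  -- decomposition of the gradient
  set w : Fin n → ℝ := fun i => (f i - ∑ j', x i j' * β0 j') - ∑ j', x i j' * δ j' with hwdef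
  set hfun : Fin p → ℝ := fun j => (2 / (n:ℝ)) * ∑ i, w i * x i j with hhfun
  have hdecomp : ∀ j, 2 * ((n:ℝ)⁻¹ * ∑ i, x i j * (y i - ∑ j', x i j' * βhat j')) =
      ((2 / n : ℝ) * ∑ i, (y i - f i) * x i j) + hfun j := by
    intro j
    have hterm : ∀ i, x i j * (y i - ∑ j', x i j' * βhat j') =
        (y i - f i) * x i j + w i * x i j := by
      intro i
      have hsplit : ∑ j', x i j' * βhat j' =
          (∑ j', x i j' * β0 j') + ∑ j', x i j' * δ j' := by
        rw [← Finset.sum_add_distrib]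
        refine Finset.sum_congr rfl fun j' _ => ?_
        simp only [hδdef]
        ring
      rw [hsplit]
      simp only [hwdef]
      ring
    rw [Finset.sum_congr rfl fun i _ => hterm i, Finset.sum_add_distrib, hhfun]
    rw [div_eq_mul_inv]
    ring
  set A : Finset (Fin p) := suppF βhat \ T with hAdef
  have hcardA : A.card = mhat := hmhat.symm
  -- lower bound on |hfun j| on A
  set aR : ℝ := lam / n - lam / (c * n) with haR
  have haR0 : 0 < aR := by
    rw [haR]
    have : lam / (c * n) < lam / n := by
      apply div_lt_div_of_pos_left hlam hn'
      nlinarith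
    linarith
  have hlow : ∀ j ∈ A, aR ≤ |hfun j| := by
    intro j hj
    have hjs : βhat j ≠ 0 := by
      have := (Finset.mem_sdiff.mp hj).1
      simpa [suppF] using this
    have hkkt := LassoAux.kkt n p hn x y hx lam hlam βhat hβhat j hjs
    rw [hdecomp j] at hkkt
    have htri := abs_add_le ((2 / n : ℝ) * ∑ i, (y i - f i) * x i j) (hfun j)
    have hSj := hSb j
    rw [haR]
    linarith [hkkt, htri, hSj, abs_nonneg (hfun j)]
  set X : ℝ := ∑ j ∈ A, hfun j ^ 2 with hX
  have hX0 : 0 ≤ X := Finset.sum_nonneg fun j _ => sq_nonneg _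
  have hXlow : (mhat : ℝ) * aR ^ 2 ≤ X := by
    rw [hX, ← hcardA]
    calc (A.card : ℝ) * aR ^ 2 = ∑ _j ∈ A, aR ^ 2 := by
          rw [Finset.sum_const, nsmul_eq_mul]
      _ ≤ ∑ j ∈ A, hfun j ^ 2 := by
          apply Finset.sum_le_sum
          intro j hj
          calc aR ^ 2 ≤ |hfun j| ^ 2 := pow_le_pow_left₀ haR0.le (hlow j hj) 2
            _ = hfun j ^ 2 := sq_abs _
  -- upper bound on X
  set u : Fin p → ℝ := restr A hfun with hu
  have hXu : ∑ j, u j ^ 2 = X := by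
    rw [hX, hu]
    rw [Finset.sum_congr rfl (fun j _ => show (restr A hfun j) ^ 2 =
      if j ∈ A then hfun j ^ 2 else 0 by by_cases h : j ∈ A <;> simp [restr, h])]
    rw [Finset.sum_ite_mem, Finset.univ_inter]
  have hphim0 : 0 ≤ phiRSE n p x T mhat := LassoAux.phi_nonneg n p x hx hTne mhat
  set W : ℝ := Real.sqrt ((n:ℝ)⁻¹ * ∑ i, w i ^ 2) with hW
  have hW0 : 0 ≤ W := Real.sqrt_nonneg _
  have hXup : X ≤ 2 * W * (Real.sqrt (phiRSE n p x T mhat) * Real.sqrt X) := by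
    have hX1 : X = 2 * ((n:ℝ)⁻¹ * ∑ i, w i * ∑ j, x i j * u j) := by
      have e1 : X = ∑ j, u j * hfun j := by
        rw [hX, hu]
        rw [Finset.sum_congr rfl (fun j _ => show restr A hfun j * hfun j =
          if j ∈ A then hfun j ^ 2 else 0 by by_cases h : j ∈ A <;> simp [restr, h, sq])]
        rw [Finset.sum_ite_mem, Finset.univ_inter]
      rw [e1]
      simp only [hhfun]
      calc ∑ j, u j * ((2 / (n:ℝ)) * ∑ i, w i * x i j)
          = ∑ j, ∑ i, (2 / (n:ℝ)) * (w i * (x i j * u j)) := by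
            refine Finset.sum_congr rfl fun j _ => ?_
            rw [Finset.mul_sum, Finset.mul_sum]
            exact Finset.sum_congr rfl fun i _ => by ring
        _ = ∑ i, ∑ j, (2 / (n:ℝ)) * (w i * (x i j * u j)) := Finset.sum_comm
        _ = 2 * ((n:ℝ)⁻¹ * ∑ i, w i * ∑ j, x i j * u j) := by
            rw [Finset.mul_sum, Finset.mul_sum]
            refine Finset.sum_congr rfl fun i _ => ?_
            rw [Finset.mul_sum, Finset.mul_sum, Finset.mul_sum]
            refine Finset.sum_congr rfl fun j _ => ?_
            rw [div_eq_mul_inv]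
            ring
    have hCS := LassoAux.nCS n w (fun i => ∑ j, x i j * u j)
    have hPu : Real.sqrt ((n:ℝ)⁻¹ * ∑ i, (∑ j, x i j * u j) ^ 2) = predNorm n p x u := rfl
    have hsuppu : (suppF (restr Tᶜ u)).card ≤ mhat := by
      rw [← hcardA]
      apply Finset.card_le_card
      intro j hj
      simp only [suppF, restr, Finset.mem_filter, Finset.mem_univ, true_and] at hj
      by_contra hjA
      apply (Finset.mem_filter.mp hj).2
      rw [hu]
      simp only [restr]
      by_cases h1 : j ∈ Tᶜ <;> simp [h1, hjA]
    have hphi := LassoAux.sq_le_phi n p x hx T mhat u hsuppu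
    rw [hXu] at hphi
    have hPu2 : predNorm n p x u ≤ Real.sqrt (phiRSE n p x T mhat) * Real.sqrt X := by
      have : predNorm n p x u = Real.sqrt ((predNorm n p x u) ^ 2) :=
        (Real.sqrt_sq (LassoAux.predNorm_nonneg n p x u)).symm
      rw [this]
      calc Real.sqrt ((predNorm n p x u) ^ 2) ≤ Real.sqrt (phiRSE n p x T mhat * X) :=
            Real.sqrt_le_sqrt hphi
        _ = Real.sqrt (phiRSE n p x T mhat) * Real.sqrt X := Real.sqrt_mul hphim0 _
    calc X = 2 * ((n:ℝ)⁻¹ * ∑ i, w i * ∑ j, x i j * u j) := hX1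
      _ ≤ 2 * (W * predNorm n p x u) := by
          have := hCS
          rw [hPu] at this
          rw [← hW] at this
          linarith [this]
      _ ≤ 2 * (W * (Real.sqrt (phiRSE n p x T mhat) * Real.sqrt X)) := by
          have := mul_le_mul_of_nonneg_left hPu2 hW0
          linarith [this]
      _ = 2 * W * (Real.sqrt (phiRSE n p x T mhat) * Real.sqrt X) := by ring
  have hsqX : Real.sqrt X ≤ 2 * W * Real.sqrt (phiRSE n p x T mhat) := by
    have hsq : Real.sqrt X * Real.sqrt X = X := Real.mul_self_sqrt hX0
    rcases eq_or_lt_of_le (Real.sqrt_nonneg X) with h | h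
    · rw [← h]
      positivity
    · have : Real.sqrt X * Real.sqrt X ≤ (2 * W * Real.sqrt (phiRSE n p x T mhat)) * Real.sqrt X := by
        rw [hsq]
        calc X ≤ 2 * W * (Real.sqrt (phiRSE n p x T mhat) * Real.sqrt X) := hXup
          _ = (2 * W * Real.sqrt (phiRSE n p x T mhat)) * Real.sqrt X := by ring
      exact le_of_mul_le_mul_right this h
  -- W ≤ cs + Dr
  have hWle : W ≤ cs + Dr := by
    have htri := LassoAux.nTri n (fun i => f i - ∑ j', x i j' * β0 j')
      (fun i => -(∑ j', x i j' * δ j'))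
    have e1 : ∑ i, ((f i - ∑ j', x i j' * β0 j') + -(∑ j', x i j' * δ j')) ^ 2 =
        ∑ i, w i ^ 2 := by
      refine Finset.sum_congr rfl fun i _ => ?_
      simp only [hwdef]
      ring
    have e2 : ∑ i, (-(∑ j', x i j' * δ j')) ^ 2 = ∑ i, (∑ j', x i j' * δ j') ^ 2 := by
      refine Finset.sum_congr rfl fun i _ => ?_
      ring
    rw [e1, e2] at htri
    rw [hW]
    calc Real.sqrt ((n:ℝ)⁻¹ * ∑ i, w i ^ 2) ≤
        Real.sqrt ((n:ℝ)⁻¹ * ∑ i, (f i - ∑ j', x i j' * β0 j') ^ 2) +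
          Real.sqrt ((n:ℝ)⁻¹ * ∑ i, (∑ j', x i j' * δ j') ^ 2) := htri
      _ = cs + Dr := by rw [← hcs]; rfl
  -- combine to the key bound
  set φm : ℝ := phiRSE n p x T mhat with hφm
  have hsqφ : 0 ≤ Real.sqrt φm := Real.sqrt_nonneg _
  have hstep1 : Real.sqrt mhat * aR ≤ Real.sqrt X := by
    calc Real.sqrt mhat * aR = Real.sqrt ((mhat:ℝ) * aR ^ 2) := by
          rw [Real.sqrt_mul (Nat.cast_nonneg mhat), Real.sqrt_sq haR0.le]
      _ ≤ Real.sqrt X := Real.sqrt_le_sqrt hXlow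
  have hstep2 : Real.sqrt mhat * aR ≤ 2 * ((1 + 1/c) * lam * Real.sqrt s / (n * κ) + 3 * cs) *
      Real.sqrt φm := by
    have h1 : W ≤ (1 + 1/c) * lam * Real.sqrt s / (n * κ) + 3 * cs := by
      have := hrate
      linarith [hWle]
    calc Real.sqrt mhat * aR ≤ Real.sqrt X := hstep1
      _ ≤ 2 * W * Real.sqrt φm := hsqX
      _ ≤ 2 * ((1 + 1/c) * lam * Real.sqrt s / (n * κ) + 3 * cs) * Real.sqrt φm := by
          apply mul_le_mul_of_nonneg_right ?_ hsqφ
          linarith [h1]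
  set E : ℝ := 2 * cbar / κ + 3 * (cbar + 1) * (n:ℝ) * cs / (lam * Real.sqrt s) with hE
  have hE0 : 0 ≤ E := by
    rw [hE]
    have h1 : 0 ≤ 2 * cbar / κ := div_nonneg (by linarith) hκ.le
    have h2 : 0 ≤ 3 * (cbar + 1) * (n:ℝ) * cs / (lam * Real.sqrt s) := by
      apply div_nonneg ?_ (mul_nonneg hlam.le hsqs.le)
      have : 0 ≤ (3:ℝ) * (cbar + 1) := by linarith
      positivity
    linarith
  have hiden : 2 * ((1 + 1/c) * lam * Real.sqrt s / (n * κ) + 3 * cs) = aR * (Real.sqrt s * E) := by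
    rw [haR, hE, hcbar]
    have hκne : κ ≠ 0 := ne_of_gt hκ
    have hnne : (n:ℝ) ≠ 0 := ne_of_gt hn'
    have hlne : lam ≠ 0 := ne_of_gt hlam
    have hsne : Real.sqrt s ≠ 0 := ne_of_gt hsqs
    field_simp
    ring
  clear_value X W u A hfun w κ Dr δ E φm
  have hstep3 : Real.sqrt mhat ≤ Real.sqrt φm * (Real.sqrt s * E) := by
    have h2 : Real.sqrt mhat * aR ≤ (Real.sqrt φm * (Real.sqrt s * E)) * aR := by
      calc Real.sqrt mhat * aR ≤ 2 * ((1 + 1/c) * lam * Real.sqrt s / (n * κ) + 3 * cs) *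
            Real.sqrt φm := hstep2
        _ = aR * (Real.sqrt s * E) * Real.sqrt φm := by rw [← hiden]
        _ = (Real.sqrt φm * (Real.sqrt s * E)) * aR := by ring
    exact le_of_mul_le_mul_right h2 haR0
  have hkey : (mhat : ℝ) ≤ (s:ℝ) * φm * Ln := by
    have h1 := pow_le_pow_left₀ (Real.sqrt_nonneg _) hstep3 2
    rw [Real.sq_sqrt (Nat.cast_nonneg mhat)] at h1
    have h2 : (Real.sqrt φm * (Real.sqrt s * E)) ^ 2 = φm * ((s:ℝ) * E ^ 2) := by
      rw [mul_pow, mul_pow, Real.sq_sqrt hphim0, Real.sq_sqrt hs0.le]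
    rw [h2] at h1
    have h3 : Ln = E ^ 2 := by rw [hLn, hE]
    rw [h3]
    calc (mhat:ℝ) ≤ φm * ((s:ℝ) * E ^ 2) := h1
      _ = (s:ℝ) * φm * E ^ 2 := by ring
  -- Part 1
  have part1 : ∀ m ∈ M, (mhat : ℝ) ≤ s * phiRSE n p x T (min m n) * Ln := by
    intro m hmM
    rw [hM] at hmM
    simp only [Set.mem_setOf_eq] at hmM
    have hphimn0 : 0 ≤ phiRSE n p x T (min m n) := LassoAux.phi_nonneg n p x hx hTne _
    by_cases hcase : mhat ≤ m
    · have hmono : phiRSE n p x T mhat ≤ phiRSE n p x T (min m n) :=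
        LassoAux.phi_mono n p x hx hTne (le_min hcase hmhatn)
      rw [hφm] at hkey
      calc (mhat:ℝ) ≤ (s:ℝ) * phiRSE n p x T mhat * Ln := hkey
        _ ≤ s * phiRSE n p x T (min m n) * Ln := by
            apply mul_le_mul_of_nonneg_right
              (mul_le_mul_of_nonneg_left hmono hs0.le) hLn0
    · push_neg at hcase
      exfalso
      have hm1 : 0 < m := by
        by_contra h0
        push_neg at h0
        have hm0 : m = 0 := by omega
        rw [hm0] at hmM
        push_cast at hmM
        have : 0 ≤ (s:ℝ) * phiRSE n p x T (min 0 n) * (2 * Ln) := by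
          apply mul_nonneg (mul_nonneg hs0.le (LassoAux.phi_nonneg n p x hx hTne _))
          linarith
        linarith
      set k : ℕ := mhat / m + 1 with hk
      have hk1 : 1 ≤ k := by rw [hk]; exact Nat.le_add_left 1 _
      have hkm : mhat ≤ k * m := by
        have h1 := Nat.div_add_mod mhat m
        have h2 := Nat.mod_lt mhat hm1
        calc mhat = m * (mhat / m) + mhat % m := (Nat.div_add_mod mhat m).symm
          _ ≤ m * (mhat / m) + m := by omega
          _ = (mhat / m + 1) * m := by ring
      have hkm2 : k * m ≤ 2 * mhat := by
        have h1 : (mhat / m) * m ≤ mhat := Nat.div_mul_le_self mhat m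
        have h2 : m ≤ mhat := hcase.le
        calc k * m = (mhat / m) * m + m := by rw [hk]; ring
          _ ≤ mhat + mhat := by omega
          _ = 2 * mhat := by ring
      have hmin : min m n = m := min_eq_left (le_trans hcase.le hmhatn)
      rw [hmin] at hmM hphimn0
      have hphichain : phiRSE n p x T mhat ≤ (k:ℝ) * phiRSE n p x T m := by
        calc phiRSE n p x T mhat ≤ phiRSE n p x T (k * m) :=
              LassoAux.phi_mono n p x hx hTne hkm
          _ ≤ (k:ℝ) * phiRSE n p x T m := LassoAux.phi_sublinear n p x hx hTne hk1
      have hchain : (mhat:ℝ) ≤ (s:ℝ) * ((k:ℝ) * phiRSE n p x T m) * Ln := by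
        rw [hφm] at hkey
        calc (mhat:ℝ) ≤ (s:ℝ) * phiRSE n p x T mhat * Ln := hkey
          _ ≤ (s:ℝ) * ((k:ℝ) * phiRSE n p x T m) * Ln :=
              mul_le_mul_of_nonneg_right
                (mul_le_mul_of_nonneg_left hphichain hs0.le) hLn0
      have hm0' : (0:ℝ) < m := by exact_mod_cast hm1
      have hmh0 : (0:ℝ) < mhat := by
        have : 0 < mhat := by omega
        exact_mod_cast this
      have hkm2' : (k:ℝ) * m ≤ 2 * mhat := by exact_mod_cast hkm2
      have e1 : (mhat:ℝ) * m ≤ (s:ℝ) * ((k:ℝ) * phiRSE n p x T m) * Ln * m :=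
        mul_le_mul_of_nonneg_right hchain hm0'.le
      have e2 : (s:ℝ) * ((k:ℝ) * phiRSE n p x T m) * Ln * m =
          (s:ℝ) * phiRSE n p x T m * Ln * ((k:ℝ) * m) := by ring
      have e3 : (s:ℝ) * phiRSE n p x T m * Ln * ((k:ℝ) * m) ≤
          (s:ℝ) * phiRSE n p x T m * Ln * (2 * mhat) := by
        apply mul_le_mul_of_nonneg_left hkm2'
        exact mul_nonneg (mul_nonneg hs0.le hphimn0) hLn0
      have e5 : ((s:ℝ) * phiRSE n p x T m * (2 * Ln)) * mhat < (m:ℝ) * mhat :=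
        mul_lt_mul_of_pos_right hmM hmh0
      have final : (mhat:ℝ) * m < (m:ℝ) * mhat := by
        calc (mhat:ℝ) * m ≤ (s:ℝ) * ((k:ℝ) * phiRSE n p x T m) * Ln * m := e1
          _ = (s:ℝ) * phiRSE n p x T m * Ln * ((k:ℝ) * m) := e2
          _ ≤ (s:ℝ) * phiRSE n p x T m * Ln * (2 * mhat) := e3
          _ = ((s:ℝ) * phiRSE n p x T m * (2 * Ln)) * mhat := by ring
          _ < (m:ℝ) * mhat := e5
      rw [mul_comm] at final
      exact lt_irrefl _ final
  refine ⟨part1, ?_⟩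
  intro hMne
  obtain ⟨m0, hm0M⟩ := hMne
  set Φ : Set ℝ := {r : ℝ | ∃ m ∈ M, r = phiRSE n p x T (min m n)} with hΦ
  have hΦne : Φ.Nonempty := ⟨_, ⟨m0, hm0M, rfl⟩⟩
  have hΦbdd : BddBelow Φ := by
    refine ⟨0, ?_⟩
    rintro r ⟨m, hm, rfl⟩
    exact LassoAux.phi_nonneg n p x hx hTne _
  by_cases hLnz : Ln = 0
  · have h0 := part1 m0 hm0M
    rw [hLnz] at h0 ⊢
    simpa using h0
  · have hLnpos : 0 < Ln := lt_of_le_of_ne hLn0 (Ne.symm hLnz)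
    have hsl : 0 < (s:ℝ) * Ln := mul_pos hs0 hLnpos
    have hlow2 : ∀ r ∈ Φ, (mhat:ℝ) / ((s:ℝ) * Ln) ≤ r := by
      rintro r ⟨m, hm, rfl⟩
      rw [div_le_iff₀ hsl]
      calc (mhat:ℝ) ≤ s * phiRSE n p x T (min m n) * Ln := part1 m hm
        _ = phiRSE n p x T (min m n) * ((s:ℝ) * Ln) := by ring
    have hinf := le_csInf hΦne hlow2
    calc (mhat:ℝ) = (mhat:ℝ) / ((s:ℝ) * Ln) * ((s:ℝ) * Ln) :=
          (div_mul_cancel₀ _ (ne_of_gt hsl)).symm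
      _ ≤ sInf Φ * ((s:ℝ) * Ln) := mul_le_mul_of_nonneg_right hinf hsl.le
      _ = (s:ℝ) * sInf Φ * Ln := by ring
end
end

section
/- Sparsity-based control of empirical error, part 2 (Lemma 4.1(2)): For every ε > 0 there exists a constant K (depending only on ε) such that for all n, p, σ > 0, designs, targets β0 and Gaussian errors as in the context with κ̃(0) > 0 and s ≥ 1, the following event has probability at least 1 − ε: simultaneously for all integers 0 ≤ k ≤ s and all subsets T̃ ⊆ T with |T \ T̃| = k, | Q̂(β0_{T̃}) − Q̂(β0) − ‖β0_{T̃^c}‖_{2,n}² | ≤ K·σ·√( (log C(s,k) + k·log(e·μ(0)))/n )·‖β0_{T̃^c}‖_{2,n} + 2·c_s·‖β0_{T̃^c}‖_{2,n}, where C(s,k) is the binomial coefficient. -/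
open Finset MeasureTheory ProbabilityTheory

noncomputable section

/-! ### Auxiliary material for the proof -/

section Aux

open Real

lemma pdf_mul_exp (v : NNReal) (hv : v ≠ 0) (u x : ℝ) :
    gaussianPDFReal 0 v x * Real.exp (u * x)
      = Real.exp ((v : ℝ) * u ^ 2 / 2) * gaussianPDFReal (u * v) v x := by
  have hv0 : (v : ℝ) ≠ 0 := by exact_mod_cast hv
  rw [show gaussianPDFReal 0 v x * Real.exp (u * x)
      = (Real.sqrt (2 * π * v))⁻¹ * Real.exp (-(x - 0) ^ 2 / (2 * v) + u * x) by
        rw [Real.exp_add, gaussianPDFReal]; ring,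
    show Real.exp ((v : ℝ) * u ^ 2 / 2) * gaussianPDFReal (u * v) v x
      = (Real.sqrt (2 * π * v))⁻¹ * Real.exp ((v : ℝ) * u ^ 2 / 2 + -(x - u * v) ^ 2 / (2 * v)) by
        rw [Real.exp_add, gaussianPDFReal]; ring]
  congr 1
  field_simp
  ring

lemma integral_exp_gaussianReal (v : NNReal) (hv : v ≠ 0) (u : ℝ) :
    ∫ y, Real.exp (u * y) ∂(gaussianReal 0 v) = Real.exp ((v : ℝ) * u ^ 2 / 2) := by
  rw [gaussianReal_of_var_ne_zero 0 hv, gaussianPDF_def]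
  rw [show (fun x => ENNReal.ofReal (gaussianPDFReal 0 v x))
      = (fun x => ((Real.toNNReal (gaussianPDFReal 0 v x) : NNReal) : ENNReal)) from rfl]
  rw [integral_withDensity_eq_integral_smul ((measurable_gaussianPDFReal 0 v).real_toNNReal)]
  have heq : ∀ y : ℝ, (Real.toNNReal (gaussianPDFReal 0 v y)) • Real.exp (u * y)
      = Real.exp ((v : ℝ) * u ^ 2 / 2) * gaussianPDFReal (u * v) v y := by
    intro y
    rw [NNReal.smul_def, smul_eq_mul, Real.coe_toNNReal _ (gaussianPDFReal_nonneg 0 v y),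
      pdf_mul_exp v hv u y]
  simp_rw [heq]
  rw [integral_const_mul, integral_gaussianPDFReal_eq_one _ hv, mul_one]

lemma integrable_exp_gaussianReal (v : NNReal) (hv : v ≠ 0) (u : ℝ) :
    Integrable (fun y => Real.exp (u * y)) (gaussianReal 0 v) := by
  rw [gaussianReal_of_var_ne_zero 0 hv, gaussianPDF_def]
  rw [show (fun x => ENNReal.ofReal (gaussianPDFReal 0 v x))
      = (fun x => ((Real.toNNReal (gaussianPDFReal 0 v x) : NNReal) : ENNReal)) from rfl]
  rw [integrable_withDensity_iff_integrable_smul ((measurable_gaussianPDFReal 0 v).real_toNNReal)]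
  have heq : ∀ y : ℝ, (Real.toNNReal (gaussianPDFReal 0 v y)) • Real.exp (u * y)
      = Real.exp ((v : ℝ) * u ^ 2 / 2) * gaussianPDFReal (u * v) v y := by
    intro y
    rw [NNReal.smul_def, smul_eq_mul, Real.coe_toNNReal _ (gaussianPDFReal_nonneg 0 v y),
      pdf_mul_exp v hv u y]
  simp_rw [heq]
  exact (integrable_gaussianPDFReal _ _).const_mul _

lemma integrable_exp_gauss {Ω : Type} [MeasurableSpace Ω] (P : Measure Ω) {X : Ω → ℝ}
    (hX : Measurable X) {v : NNReal} (hv : v ≠ 0)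
    (hmap : Measure.map X P = gaussianReal 0 v) (u : ℝ) :
    Integrable (fun ω => Real.exp (u * X ω)) P :=
  (integrable_map_measure (f := X) (g := fun y => Real.exp (u * y))
    ((measurable_const_mul u).exp.aestronglyMeasurable) hX.aemeasurable).mp
    (by rw [hmap]; exact integrable_exp_gaussianReal v hv u)

lemma integral_exp_gauss {Ω : Type} [MeasurableSpace Ω] (P : Measure Ω) {X : Ω → ℝ}
    (hX : Measurable X) {v : NNReal} (hv : v ≠ 0)
    (hmap : Measure.map X P = gaussianReal 0 v) (u : ℝ) :
    ∫ ω, Real.exp (u * X ω) ∂P = Real.exp ((v : ℝ) * u ^ 2 / 2) := by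
  rw [← integral_exp_gaussianReal v hv u, ← hmap,
    integral_map hX.aemeasurable ((measurable_const_mul u).exp.aestronglyMeasurable)]

lemma gauss_tail_one {Ω : Type} [MeasurableSpace Ω] {n : ℕ} (P : Measure Ω)
    [IsProbabilityMeasure P]
    (e : Fin n → Ω → ℝ) (hmeas : ∀ i, Measurable (e i))
    (hind : iIndepFun e P)
    {v : NNReal} (hv : v ≠ 0)
    (hmap : ∀ i, Measure.map (e i) P = gaussianReal 0 v)
    (b : Fin n → ℝ) (hb : 0 < ∑ i, b i ^ 2) (t : ℝ) (ht : 0 ≤ t) :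
    P {ω | t ≤ ∑ i, b i * e i ω} ≤
      ENNReal.ofReal (Real.exp (-t ^ 2 / (2 * (v : ℝ) * ∑ i, b i ^ 2))) := by
  have hv0 : (0 : ℝ) < v := lt_of_le_of_ne v.coe_nonneg (by exact_mod_cast Ne.symm hv)
  set S := ∑ i, b i ^ 2 with hS
  set lam := t / ((v : ℝ) * S) with hlam
  have hlam0 : 0 ≤ lam := div_nonneg ht (by positivity)
  set X : Fin n → Ω → ℝ := fun i ω => b i * e i ω with hX
  have hXmeas : ∀ i, Measurable (X i) := fun i => (hmeas i).const_mul (b i)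
  have hXind : iIndepFun X P :=
    hind.comp (fun i x => b i * x) (fun i => measurable_const_mul _)
  have hXrw : ∀ i (u : ℝ), (fun ω => Real.exp (u * X i ω))
      = (fun ω => Real.exp ((u * b i) * e i ω)) := by
    intro i u; funext ω; rw [hX]; ring_nf
  have hint : ∀ (i : Fin n) (u : ℝ), Integrable (fun ω => Real.exp (u * X i ω)) P := by
    intro i u; rw [hXrw i u]; exact integrable_exp_gauss P (hmeas i) hv (hmap i) _
  have hYint : Integrable (fun ω => Real.exp (lam * (∑ i, X i) ω)) P :=
    iIndepFun.integrable_exp_mul_sum hXind hXmeas (fun i _ => hint i lam)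
  have hmgfi : ∀ i : Fin n, mgf (X i) P lam = Real.exp ((v : ℝ) * lam ^ 2 / 2 * b i ^ 2) := by
    intro i
    rw [mgf, hXrw i lam, integral_exp_gauss P (hmeas i) hv (hmap i) (lam * b i)]
    congr 1; ring
  have hmgf : mgf (∑ i, X i) P lam = Real.exp ((v : ℝ) * lam ^ 2 / 2 * S) := by
    rw [iIndepFun.mgf_sum hXind hXmeas univ]
    simp_rw [hmgfi]
    rw [← Real.exp_sum, ← Finset.mul_sum]
  have hch := measure_ge_le_exp_mul_mgf t hlam0 hYint
  rw [hmgf, ← Real.exp_add] at hch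
  have hexp : -lam * t + (v : ℝ) * lam ^ 2 / 2 * S = -t ^ 2 / (2 * (v : ℝ) * S) := by
    rw [hlam]; field_simp; ring
  rw [hexp] at hch
  have hset : {ω | t ≤ ∑ i, b i * e i ω} = {ω | t ≤ (∑ i, X i) ω} := by
    ext ω; simp [hX]
  rw [hset, ← ENNReal.ofReal_toReal (measure_ne_top P _)]
  exact ENNReal.ofReal_le_ofReal hch

lemma gauss_tail_abs {Ω : Type} [MeasurableSpace Ω] {n : ℕ} (P : Measure Ω)
    [IsProbabilityMeasure P]
    (e : Fin n → Ω → ℝ) (hmeas : ∀ i, Measurable (e i))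
    (hind : iIndepFun e P)
    {v : NNReal} (hv : v ≠ 0)
    (hmap : ∀ i, Measure.map (e i) P = gaussianReal 0 v)
    (b : Fin n → ℝ) (hb : 0 < ∑ i, b i ^ 2) (t : ℝ) (ht : 0 ≤ t) :
    P {ω | t ≤ |∑ i, b i * e i ω|} ≤
      ENNReal.ofReal (2 * Real.exp (-t ^ 2 / (2 * (v : ℝ) * ∑ i, b i ^ 2))) := by
  have hsub : {ω | t ≤ |∑ i, b i * e i ω|} ⊆
      {ω | t ≤ ∑ i, b i * e i ω} ∪ {ω | t ≤ ∑ i, (-b i) * e i ω} := by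
    intro ω hω
    rcases le_abs.mp (Set.mem_setOf_eq ▸ hω) with h | h
    · exact Or.inl h
    · refine Or.inr ?_
      simpa [neg_mul, ← Finset.sum_neg_distrib] using h
  have hb' : 0 < ∑ i, (-b i) ^ 2 := by simpa [neg_sq] using hb
  calc P {ω | t ≤ |∑ i, b i * e i ω|}
      ≤ P ({ω | t ≤ ∑ i, b i * e i ω} ∪ {ω | t ≤ ∑ i, (-b i) * e i ω}) := measure_mono hsub
    _ ≤ P {ω | t ≤ ∑ i, b i * e i ω} + P {ω | t ≤ ∑ i, (-b i) * e i ω} := measure_union_le _ _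
    _ ≤ ENNReal.ofReal (Real.exp (-t ^ 2 / (2 * (v : ℝ) * ∑ i, b i ^ 2))) +
        ENNReal.ofReal (Real.exp (-t ^ 2 / (2 * (v : ℝ) * ∑ i, (-b i) ^ 2))) :=
        add_le_add (gauss_tail_one P e hmeas hind hv hmap b hb t ht)
          (gauss_tail_one P e hmeas hind hv hmap (fun i => -b i) hb' t ht)
    _ = ENNReal.ofReal (2 * Real.exp (-t ^ 2 / (2 * (v : ℝ) * ∑ i, b i ^ 2))) := by
        simp only [neg_sq]
        rw [two_mul (Real.exp (-t ^ 2 / (2 * (v : ℝ) * ∑ i, b i ^ 2))),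
          ENNReal.ofReal_add (Real.exp_nonneg _) (Real.exp_nonneg _)]

lemma sum_sq_pos_of_ne_zero {p : ℕ} {δ : Fin p → ℝ} (hδ : δ ≠ 0) : 0 < ∑ j, δ j ^ 2 := by
  obtain ⟨j0, hj0⟩ := Function.ne_iff.mp hδ
  refine Finset.sum_pos' (fun j _ => sq_nonneg _) ⟨j0, Finset.mem_univ _, ?_⟩
  have : δ j0 ≠ 0 := hj0
  positivity

lemma one_le_muCond (n p : ℕ) (hn : 0 < n) (x : Fin n → Fin p → ℝ)
    (hx : ∀ j, (n : ℝ)⁻¹ * ∑ i, x i j ^ 2 = 1) (T : Finset (Fin p)) (hT : T.Nonempty)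
    (hκ : 0 < kappaTildeSq n p x T 0) : 1 ≤ muCond n p x T 0 := by
  set S0 := {r : ℝ | ∃ δ : Fin p → ℝ, δ ≠ 0 ∧ (suppF (restr Tᶜ δ)).card ≤ 0 ∧
    r = (predNorm n p x δ) ^ 2 / ∑ j, δ j ^ 2} with hS0
  obtain ⟨j0, hj0⟩ := hT
  set δ0 : Fin p → ℝ := fun j => if j = j0 then 1 else 0 with hδ0def
  have hδ0 : δ0 ≠ 0 := by
    intro h
    have := congrFun h j0
    simp [hδ0def] at this
  have hrestr0 : restr Tᶜ δ0 = 0 := by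
    funext j
    by_cases hj : j = j0
    · subst hj; simp [restr, hj0]
    · simp [restr, hδ0def, hj]
  have hmem : (predNorm n p x δ0) ^ 2 / ∑ j, δ0 j ^ 2 ∈ S0 := by
    refine ⟨δ0, hδ0, ?_, rfl⟩
    rw [hrestr0]
    simp [suppF]
  have hbdd_below : BddBelow S0 := by
    refine ⟨0, fun r hr => ?_⟩
    obtain ⟨δ, hδ, _, rfl⟩ := hr
    exact div_nonneg (sq_nonneg _) (Finset.sum_nonneg fun j _ => sq_nonneg _)
  have hbdd_above : BddAbove S0 := by
    refine ⟨p, fun r hr => ?_⟩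
    obtain ⟨δ, hδ, _, rfl⟩ := hr
    have hpos := sum_sq_pos_of_ne_zero hδ
    rw [div_le_iff₀ hpos]
    have h1 : (predNorm n p x δ) ^ 2 = (n : ℝ)⁻¹ * ∑ i, (∑ j, x i j * δ j) ^ 2 :=
      Real.sq_sqrt (by positivity)
    rw [h1]
    calc (n : ℝ)⁻¹ * ∑ i, (∑ j, x i j * δ j) ^ 2
        ≤ (n : ℝ)⁻¹ * ∑ i, ((∑ j, x i j ^ 2) * ∑ j, δ j ^ 2) := by
          refine mul_le_mul_of_nonneg_left (Finset.sum_le_sum fun i _ => ?_) (by positivity)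
          simpa [mul_pow] using Finset.sum_mul_sq_le_sq_mul_sq Finset.univ (fun j => x i j) δ
      _ = (p : ℝ) * ∑ j, δ j ^ 2 := by
          rw [← Finset.sum_mul, ← mul_assoc]
          congr 1
          have h2 : (n : ℝ)⁻¹ * ∑ i, ∑ j, x i j ^ 2
              = ∑ j : Fin p, (n : ℝ)⁻¹ * ∑ i, x i j ^ 2 := by
            rw [Finset.sum_comm (f := fun i j => x i j ^ 2), Finset.mul_sum]
          rw [h2]
          simp [hx]
  have hle : kappaTildeSq n p x T 0 ≤ phiRSE n p x T 0 :=
    le_trans (csInf_le hbdd_below hmem) (le_csSup hbdd_above hmem)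
  have hsqrtκ : 0 < Real.sqrt (kappaTildeSq n p x T 0) := Real.sqrt_pos.mpr hκ
  rw [muCond, le_div_iff₀ hsqrtκ, one_mul]
  exact Real.sqrt_le_sqrt hle

lemma sum_powerset_bound {α : Type*} [DecidableEq α] (T : Finset α)
    (q : ℝ) (hq0 : 0 ≤ q) (hq1 : q ≤ 1 / 2) :
    ∑ A ∈ T.powerset, (if (T \ A).card = 0 then 0
      else 2 * ((T.card.choose (T \ A).card : ℝ))⁻¹ * q ^ (T \ A).card) ≤ 4 * q := by
  set c := T.card with hc
  set G : ℕ → ℝ := fun k => if k = 0 then 0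
      else 2 * ((c.choose k : ℝ))⁻¹ * q ^ k with hG
  have hstep1 : ∑ A ∈ T.powerset, G (T \ A).card
      = ∑ j ∈ range (c + 1), (c.choose j : ℝ) * G (c - j) := by
    rw [Finset.sum_powerset]
    refine Finset.sum_congr rfl fun j hj => ?_
    have hinner : ∀ A ∈ powersetCard j T, G (T \ A).card = G (c - j) := by
      intro A hA
      obtain ⟨hsub, hcard⟩ := Finset.mem_powersetCard.mp hA
      rw [Finset.card_sdiff_of_subset hsub, hcard]
    rw [Finset.sum_congr rfl hinner, Finset.sum_const, Finset.card_powersetCard,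
      nsmul_eq_mul]
  have hstep2 : ∑ j ∈ range (c + 1), (c.choose j : ℝ) * G (c - j)
      = ∑ k ∈ range (c + 1), (c.choose k : ℝ) * G k := by
    rw [← Finset.sum_range_reflect (fun j => (c.choose j : ℝ) * G (c - j)) (c + 1)]
    refine Finset.sum_congr rfl fun j hj => ?_
    have hj' : j ≤ c := Nat.lt_succ_iff.mp (Finset.mem_range.mp hj)
    have h1 : c + 1 - 1 - j = c - j := by omega
    rw [h1, Nat.sub_sub_self hj', Nat.choose_symm hj']
  have hstep3 : ∑ k ∈ range (c + 1), (c.choose k : ℝ) * G k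
      = ∑ k ∈ range (c + 1), (if k = 0 then 0 else 2 * q ^ k) := by
    refine Finset.sum_congr rfl fun k hk => ?_
    have hk' : k ≤ c := Nat.lt_succ_iff.mp (Finset.mem_range.mp hk)
    by_cases h0 : k = 0
    · simp [hG, h0]
    · have hch : (0 : ℝ) < (c.choose k : ℝ) := by
        exact_mod_cast Nat.choose_pos hk'
      simp only [hG, h0, if_false]
      field_simp
  have hstep4 : ∑ k ∈ range (c + 1), (if k = 0 then 0 else 2 * q ^ k) ≤ 4 * q := by
    rw [Finset.sum_range_succ' (fun k => if k = 0 then 0 else 2 * q ^ k) c]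
    norm_num
    have h5 : ∑ i ∈ range c, 2 * q ^ (i + 1) = 2 * q * ∑ i ∈ range c, q ^ i := by
      rw [Finset.mul_sum]
      exact Finset.sum_congr rfl fun i _ => by ring
    rw [h5]
    have hgeom : ∑ i ∈ range c, q ^ i ≤ 2 := by
      have hlt : q < 1 := lt_of_le_of_lt hq1 (by norm_num)
      have h6 := Summable.sum_le_tsum (Finset.range c) (fun i _ => pow_nonneg hq0 i)
        (summable_geometric_of_lt_one hq0 hlt)
      rw [tsum_geometric_of_lt_one hq0 hlt] at h6
      refine h6.trans ?_
      rw [show (2 : ℝ) = ((1:ℝ)/2)⁻¹ by norm_num]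
      exact inv_anti₀ (by norm_num) (by linarith)
    calc 2 * q * ∑ i ∈ range c, q ^ i ≤ 2 * q * 2 :=
          mul_le_mul_of_nonneg_left hgeom (by positivity)
      _ = 4 * q := by ring
  calc ∑ A ∈ T.powerset, (if (T \ A).card = 0 then 0
      else 2 * ((c.choose (T \ A).card : ℝ))⁻¹ * q ^ (T \ A).card)
      = ∑ A ∈ T.powerset, G (T \ A).card := rfl
    _ ≤ 4 * q := by rw [hstep1, hstep2, hstep3]; exact hstep4

lemma Q_identity (n p : ℕ) (x : Fin n → Fin p → ℝ) (y : Fin n → ℝ)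
    (β0 : Fin p → ℝ) (Ttil : Finset (Fin p)) :
    Qls n p x y (restr Ttil β0) - Qls n p x y β0 - predNorm n p x (restr Ttilᶜ β0) ^ 2
      = 2 * (n : ℝ)⁻¹ * ∑ i, (y i - ∑ j, x i j * β0 j) * (∑ j, x i j * restr Ttilᶜ β0 j) := by
  have hβ : ∀ j, β0 j = restr Ttil β0 j + restr Ttilᶜ β0 j := by
    intro j
    by_cases hj : j ∈ Ttil <;> simp [restr, hj]
  have hsplit : ∀ i, y i - ∑ j, x i j * restr Ttil β0 j
      = (y i - ∑ j, x i j * β0 j) + ∑ j, x i j * restr Ttilᶜ β0 j := by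
    intro i
    have h1 : ∑ j, x i j * β0 j
        = ∑ j, x i j * restr Ttil β0 j + ∑ j, x i j * restr Ttilᶜ β0 j := by
      rw [← Finset.sum_add_distrib]
      refine Finset.sum_congr rfl fun j _ => ?_
      rw [hβ j]; ring
    rw [h1]; ring
  have hpred : predNorm n p x (restr Ttilᶜ β0) ^ 2
      = (n : ℝ)⁻¹ * ∑ i, (∑ j, x i j * restr Ttilᶜ β0 j) ^ 2 :=
    Real.sq_sqrt (by positivity)
  rw [Qls, Qls, hpred]
  have h2 : ∑ i, (y i - ∑ j, x i j * restr Ttil β0 j) ^ 2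
      = ∑ i, ((y i - ∑ j, x i j * β0 j) + ∑ j, x i j * restr Ttilᶜ β0 j) ^ 2 :=
    Finset.sum_congr rfl fun i _ => by rw [hsplit i]
  rw [h2]
  have h3 : ∑ i, ((y i - ∑ j, x i j * β0 j) + ∑ j, x i j * restr Ttilᶜ β0 j) ^ 2
      = ∑ i, (y i - ∑ j, x i j * β0 j) ^ 2
        + (2 * ∑ i, (y i - ∑ j, x i j * β0 j) * (∑ j, x i j * restr Ttilᶜ β0 j)
          + ∑ i, (∑ j, x i j * restr Ttilᶜ β0 j) ^ 2) := by
    rw [Finset.mul_sum, ← Finset.sum_add_distrib, ← Finset.sum_add_distrib]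
    exact Finset.sum_congr rfl fun i _ => by ring
  rw [h3]
  ring

lemma cs_bound (n : ℕ) (r a : Fin n → ℝ) :
    |2 * (n : ℝ)⁻¹ * ∑ i, r i * a i|
      ≤ 2 * Real.sqrt ((n : ℝ)⁻¹ * ∑ i, r i ^ 2) * Real.sqrt ((n : ℝ)⁻¹ * ∑ i, a i ^ 2) := by
  have h1 : |∑ i, r i * a i| ≤ Real.sqrt (∑ i, r i ^ 2) * Real.sqrt (∑ i, a i ^ 2) := by
    have := Real.abs_le_sqrt (Finset.sum_mul_sq_le_sq_mul_sq Finset.univ r a)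
    rwa [Real.sqrt_mul (Finset.sum_nonneg fun i _ => sq_nonneg _)] at this
  have h2 : Real.sqrt ((n : ℝ)⁻¹ * ∑ i, r i ^ 2) * Real.sqrt ((n : ℝ)⁻¹ * ∑ i, a i ^ 2)
      = (n : ℝ)⁻¹ * (Real.sqrt (∑ i, r i ^ 2) * Real.sqrt (∑ i, a i ^ 2)) := by
    rw [Real.sqrt_mul (by positivity : (0:ℝ) ≤ (n : ℝ)⁻¹),
      Real.sqrt_mul (by positivity : (0:ℝ) ≤ (n : ℝ)⁻¹)]
    rw [show Real.sqrt (n : ℝ)⁻¹ * Real.sqrt (∑ i, r i ^ 2)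
        * (Real.sqrt (n : ℝ)⁻¹ * Real.sqrt (∑ i, a i ^ 2))
        = (Real.sqrt (n : ℝ)⁻¹ * Real.sqrt (n : ℝ)⁻¹)
          * (Real.sqrt (∑ i, r i ^ 2) * Real.sqrt (∑ i, a i ^ 2)) by ring,
      Real.mul_self_sqrt (by positivity)]
  calc |2 * (n : ℝ)⁻¹ * ∑ i, r i * a i| = 2 * (n : ℝ)⁻¹ * |∑ i, r i * a i| := by
        rw [abs_mul, abs_of_nonneg (by positivity : (0:ℝ) ≤ 2 * (n:ℝ)⁻¹)]
    _ ≤ 2 * (n : ℝ)⁻¹ * (Real.sqrt (∑ i, r i ^ 2) * Real.sqrt (∑ i, a i ^ 2)) :=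
        mul_le_mul_of_nonneg_left h1 (by positivity)
    _ = 2 * ((n : ℝ)⁻¹ * (Real.sqrt (∑ i, r i ^ 2) * Real.sqrt (∑ i, a i ^ 2))) := by ring
    _ = 2 * (Real.sqrt ((n : ℝ)⁻¹ * ∑ i, r i ^ 2) * Real.sqrt ((n : ℝ)⁻¹ * ∑ i, a i ^ 2)) := by
        rw [h2]
    _ = 2 * Real.sqrt ((n : ℝ)⁻¹ * ∑ i, r i ^ 2) * Real.sqrt ((n : ℝ)⁻¹ * ∑ i, a i ^ 2) := by
        ring

/-- `x_i' (β0 restricted off `A`)`. -/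
def aFn (n p : ℕ) (x : Fin n → Fin p → ℝ) (β0 : Fin p → ℝ) (A : Finset (Fin p))
    (i : Fin n) : ℝ := ∑ j, x i j * restr Aᶜ β0 j

/-- Coefficients of the Gaussian linear form appearing in the empirical error. -/
def bFn (n p : ℕ) (x : Fin n → Fin p → ℝ) (β0 : Fin p → ℝ) (A : Finset (Fin p))
    (i : Fin n) : ℝ := 2 * (n : ℝ)⁻¹ * aFn n p x β0 A i

/-- The complexity term `log C(s,k) + k log (e μ(0))`. -/
def LFn (n p : ℕ) (x : Fin n → Fin p → ℝ) (T : Finset (Fin p)) (s k : ℕ) : ℝ :=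
  Real.log (Nat.choose s k) + k * Real.log (Real.exp 1 * muCond n p x T 0)

/-- The threshold attached to a truncation set. -/
def thrFn (n p : ℕ) (x : Fin n → Fin p → ℝ) (β0 : Fin p → ℝ) (T : Finset (Fin p))
    (s : ℕ) (K σ : ℝ) (A : Finset (Fin p)) : ℝ :=
  K * σ * Real.sqrt (LFn n p x T s (T \ A).card / n) * predNorm n p x (restr Aᶜ β0)

/-- The bad event attached to a truncation set. -/
def BadSet (n p : ℕ) (x : Fin n → Fin p → ℝ) (β0 : Fin p → ℝ) (T : Finset (Fin p))
    (s : ℕ) (K σ : ℝ) {Ω : Type} (e : Fin n → Ω → ℝ) (A : Finset (Fin p)) : Set Ω :=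
  {ω | thrFn n p x β0 T s K σ A ≤ |∑ i, bFn n p x β0 A i * e i ω|}

lemma four_q_le (ε : ℝ) (hε : 0 < ε) : 4 * Real.exp (-(1 + max 0 (Real.log (4 / ε)))) ≤ ε := by
  by_cases h4 : ε ≤ 4
  · have hlog0 : 0 ≤ Real.log (4 / ε) := Real.log_nonneg (by rw [le_div_iff₀ hε]; linarith)
    rw [max_eq_right hlog0, show -(1 + Real.log (4 / ε)) = -1 + -Real.log (4 / ε) by ring,
      Real.exp_add, Real.exp_neg (Real.log (4 / ε)), Real.exp_log (by positivity), inv_div]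
    have hε1 : Real.exp (-1) ≤ 1 := by
      have := Real.exp_le_exp.mpr (by norm_num : (-1 : ℝ) ≤ 0)
      rwa [Real.exp_zero] at this
    nlinarith [Real.exp_pos (-1)]
  · push_neg at h4
    have hle1 : Real.exp (-(1 + max 0 (Real.log (4 / ε)))) ≤ 1 := by
      have h5 : -(1 + max 0 (Real.log (4 / ε))) ≤ 0 := by
        have := le_max_left (0 : ℝ) (Real.log (4 / ε)); linarith
      calc Real.exp (-(1 + max 0 (Real.log (4 / ε)))) ≤ Real.exp 0 := Real.exp_le_exp.mpr h5
        _ = 1 := Real.exp_zero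
    linarith

end Aux

/-- Lemma 4.1(2): sparsity-based control of the empirical error for
truncations of the oracle target. -/
theorem sparsity_control_empirical_error_part2
    (ε : ℝ) (hε : 0 < ε) :
    ∃ K : ℝ,
      ∀ (n p : ℕ), 0 < n → 0 < p →
      ∀ (x : Fin n → Fin p → ℝ), (∀ j, (n : ℝ)⁻¹ * ∑ i, x i j ^ 2 = 1) →
      ∀ (σ : ℝ), 0 < σ →
      ∀ (f : Fin n → ℝ) (β0 : Fin p → ℝ) (T : Finset (Fin p)), T = suppF β0 →
      ∀ s : ℕ, s = T.card → 1 ≤ s →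
      0 < kappaTildeSq n p x T 0 →
      ∀ cs : ℝ, cs = Real.sqrt ((n : ℝ)⁻¹ * ∑ i, (f i - ∑ j, x i j * β0 j) ^ 2) →
      ∀ (Ω : Type) (mΩ : MeasurableSpace Ω) (P : Measure Ω), IsProbabilityMeasure P →
      ∀ (e : Fin n → Ω → ℝ), (∀ i, Measurable (e i)) →
      iIndepFun e P →
      (∀ i, Measure.map (e i) P = gaussianReal 0 ⟨σ ^ 2, sq_nonneg σ⟩) →
      P {ω | ∀ k : ℕ, k ≤ s → ∀ Ttil : Finset (Fin p), Ttil ⊆ T → (T \ Ttil).card = k →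
            |Qls n p x (fun i => f i + e i ω) (restr Ttil β0) -
                Qls n p x (fun i => f i + e i ω) β0 -
                predNorm n p x (restr Ttilᶜ β0) ^ 2| ≤
              K * σ * Real.sqrt ((Real.log (Nat.choose s k) +
                  k * Real.log (Real.exp 1 * muCond n p x T 0)) / n) *
                predNorm n p x (restr Ttilᶜ β0) +
                2 * cs * predNorm n p x (restr Ttilᶜ β0)} ≥
        ENNReal.ofReal (1 - ε) := by
  classical
  set c : ℝ := 1 + max 0 (Real.log (4 / ε)) with hc
  have hc1 : 1 ≤ c := by
    have := le_max_left (0 : ℝ) (Real.log (4 / ε)); rw [hc]; linarith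
  have hc0 : 0 < c := by linarith
  refine ⟨Real.sqrt (8 * c), ?_⟩
  intro n p hn hp x hx σ hσ f β0 T hT s hs hs1 hκ cs hcs Ω mΩ P hP e hemeas hind hmap
  set K := Real.sqrt (8 * c) with hK
  have hK2 : K ^ 2 = 8 * c := Real.sq_sqrt (by positivity)
  have hK0 : 0 < K := Real.sqrt_pos.mpr (by positivity)
  have hn0 : (0 : ℝ) < n := by exact_mod_cast hn
  have hn' : (n : ℝ) ≠ 0 := ne_of_gt hn0
  set v : NNReal := (⟨σ ^ 2, sq_nonneg σ⟩ : NNReal) with hv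
  have hvr : (v : ℝ) = σ ^ 2 := rfl
  have hvne : v ≠ 0 := by
    intro h
    have h2 : (v : ℝ) = 0 := by rw [h]; simp
    rw [hvr] at h2
    exact (pow_ne_zero 2 (ne_of_gt hσ)) h2
  have hTne : T.Nonempty := Finset.card_pos.mp (by omega)
  have hμ : 1 ≤ muCond n p x T 0 := one_le_muCond n p hn x hx T hTne hκ
  have hμ0 : 0 < muCond n p x T 0 := lt_of_lt_of_le one_pos hμ
  have hlogμ : 1 ≤ Real.log (Real.exp 1 * muCond n p x T 0) := by
    rw [Real.log_mul (Real.exp_ne_zero 1) (ne_of_gt hμ0), Real.log_exp]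
    have := Real.log_nonneg hμ; linarith
  have hLchoose : ∀ k, k ≤ s → 0 ≤ Real.log (Nat.choose s k) := fun k hk =>
    Real.log_nonneg (by exact_mod_cast Nat.choose_pos hk)
  have hLlb : ∀ k, k ≤ s → Real.log (Nat.choose s k) + k ≤ LFn n p x T s k := by
    intro k hk
    have h1 : (k : ℝ) * 1 ≤ (k : ℝ) * Real.log (Real.exp 1 * muCond n p x T 0) :=
      mul_le_mul_of_nonneg_left hlogμ (Nat.cast_nonneg k)
    rw [LFn]; linarith
  have hL0 : ∀ k, k ≤ s → 0 ≤ LFn n p x T s k := by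
    intro k hk
    have := hLlb k hk
    have h2 := hLchoose k hk
    have h3 : (0:ℝ) ≤ k := Nat.cast_nonneg k
    linarith
  set S : Finset (Finset (Fin p)) :=
    T.powerset.filter (fun A => 0 < ∑ i, aFn n p x β0 A i ^ 2) with hSdef
  have hmemS : ∀ A ∈ S, A ⊆ T ∧ 0 < ∑ i, aFn n p x β0 A i ^ 2 := by
    intro A hA
    rw [hSdef, Finset.mem_filter, Finset.mem_powerset] at hA
    exact hA
  have hkS : ∀ A ∈ S, 1 ≤ (T \ A).card ∧ (T \ A).card ≤ s := by
    intro A hA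
    obtain ⟨hsub, hpos⟩ := hmemS A hA
    constructor
    · by_contra h
      have h0 : (T \ A).card = 0 := by omega
      have hTA : T ⊆ A := by
        rw [Finset.card_eq_zero, Finset.sdiff_eq_empty_iff_subset] at h0
        exact h0
      have hA0 : restr Aᶜ β0 = 0 := by
        funext j
        by_cases hj : j ∈ A
        · simp [restr, hj]
        · have hjT : j ∉ T := fun hh => hj (hTA hh)
          have hβ0 : β0 j = 0 := by
            by_contra hne
            exact hjT (hT ▸ (Finset.mem_filter.mpr ⟨Finset.mem_univ _, hne⟩))
          simp [restr, hβ0]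
      have hz : ∑ i, aFn n p x β0 A i ^ 2 = 0 := by
        apply Finset.sum_eq_zero
        intro i _
        rw [aFn, hA0]
        simp
      rw [hz] at hpos
      exact lt_irrefl 0 hpos
    · have h4 := Finset.card_le_card (Finset.sdiff_subset (s := T) (t := A))
      omega
  have hprednn : ∀ A : Finset (Fin p), 0 ≤ predNorm n p x (restr Aᶜ β0) := by
    intro A
    rw [predNorm]
    exact Real.sqrt_nonneg _
  -- per event probability bound
  have hprob : ∀ A ∈ S, P (BadSet n p x β0 T s K σ e A) ≤
      ENNReal.ofReal (2 * Real.exp (-(c * LFn n p x T s (T \ A).card))) := by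
    intro A hA
    obtain ⟨hsub, hpos⟩ := hmemS A hA
    obtain ⟨hk1, hks⟩ := hkS A hA
    have hSig : (∑ i, aFn n p x β0 A i ^ 2) ≠ 0 := ne_of_gt hpos
    have hpred2 : predNorm n p x (restr Aᶜ β0) ^ 2 = (n:ℝ)⁻¹ * ∑ i, aFn n p x β0 A i ^ 2 := by
      have h0 : predNorm n p x (restr Aᶜ β0)
          = Real.sqrt ((n:ℝ)⁻¹ * ∑ i, aFn n p x β0 A i ^ 2) := rfl
      rw [h0]
      exact Real.sq_sqrt (by positivity)
    have hb2 : ∑ i, bFn n p x β0 A i ^ 2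
        = 4 * (n:ℝ)⁻¹ * (n:ℝ)⁻¹ * ∑ i, aFn n p x β0 A i ^ 2 := by
      rw [Finset.mul_sum]
      exact Finset.sum_congr rfl fun i _ => by rw [bFn]; ring
    have hbpos : 0 < ∑ i, bFn n p x β0 A i ^ 2 := by
      rw [hb2]
      exact mul_pos (by positivity) hpos
    have hthr0 : 0 ≤ thrFn n p x β0 T s K σ A := by
      rw [thrFn]
      exact mul_nonneg (mul_nonneg (mul_nonneg hK0.le hσ.le) (Real.sqrt_nonneg _)) (hprednn A)
    have hthr2 : thrFn n p x β0 T s K σ A ^ 2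
        = K ^ 2 * σ ^ 2 * (LFn n p x T s (T \ A).card / n)
          * ((n:ℝ)⁻¹ * ∑ i, aFn n p x β0 A i ^ 2) := by
      rw [thrFn, mul_pow, mul_pow, mul_pow,
        Real.sq_sqrt (div_nonneg (hL0 _ hks) hn0.le), hpred2]
    have htail := gauss_tail_abs P e hemeas hind hvne hmap (bFn n p x β0 A) hbpos
      (thrFn n p x β0 T s K σ A) hthr0
    have hexp : -thrFn n p x β0 T s K σ A ^ 2 / (2 * (v:ℝ) * ∑ i, bFn n p x β0 A i ^ 2)
        = -(c * LFn n p x T s (T \ A).card) := by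
      rw [hthr2, hb2, hK2, hvr]
      field_simp
      ring
    rw [hexp] at htail
    exact htail
  set U : Set Ω := ⋃ A ∈ S, BadSet n p x β0 T s K σ e A with hU
  have hBmeas : ∀ A : Finset (Fin p), MeasurableSet (BadSet n p x β0 T s K σ e A) := by
    intro A
    have hm : Measurable fun ω => |∑ i, bFn n p x β0 A i * e i ω| :=
      (Finset.measurable_sum Finset.univ fun i _ => ((hemeas i).const_mul _)).abs
    exact measurableSet_le measurable_const hm
  have hUmeas : MeasurableSet U :=
    MeasurableSet.biUnion S.countable_toSet (fun A _ => hBmeas A)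
  -- total probability of bad events
  set q : ℝ := Real.exp (-c) with hqdef
  have hq0 : 0 ≤ q := (Real.exp_pos _).le
  have hq1 : q ≤ 1 / 2 := by
    rw [hqdef]
    have h1 : Real.exp (-c) ≤ Real.exp (-1) := Real.exp_le_exp.mpr (by linarith)
    have h2 : Real.exp (-1) ≤ 1 / 2 := by
      rw [Real.exp_neg, show (1:ℝ)/2 = 2⁻¹ by norm_num]
      have h3 : (2:ℝ) ≤ Real.exp 1 := by have := Real.add_one_le_exp 1; linarith
      exact inv_anti₀ (by norm_num) h3
    linarith
  have hper : ∀ A ∈ S, 2 * Real.exp (-(c * LFn n p x T s (T \ A).card))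
      ≤ (if (T \ A).card = 0 then 0
        else 2 * ((s.choose (T \ A).card : ℝ))⁻¹ * q ^ (T \ A).card) := by
    intro A hA
    obtain ⟨hk1, hks⟩ := hkS A hA
    set k := (T \ A).card with hkdef
    rw [if_neg (by omega)]
    have hCpos : (0:ℝ) < (s.choose k : ℝ) := by exact_mod_cast Nat.choose_pos hks
    have e1 : -(c * LFn n p x T s k) ≤ -(c * (Real.log (s.choose k) + k)) := by
      have := hLlb k hks
      nlinarith
    calc 2 * Real.exp (-(c * LFn n p x T s k))
        ≤ 2 * Real.exp (-(c * (Real.log (s.choose k) + k))) := by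
          exact mul_le_mul_of_nonneg_left (Real.exp_le_exp.mpr e1) (by norm_num)
      _ = 2 * (Real.exp (-(c * Real.log (s.choose k))) * Real.exp (-(c * (k:ℝ)))) := by
          rw [← Real.exp_add]
          congr 1
          ring
      _ ≤ 2 * (((s.choose k : ℝ))⁻¹ * q ^ k) := by
          have hA1 : Real.exp (-(c * Real.log (s.choose k))) ≤ ((s.choose k : ℝ))⁻¹ := by
            have h5 : -(c * Real.log (s.choose k)) ≤ -Real.log (s.choose k) := by
              nlinarith [hLchoose k hks]
            calc Real.exp (-(c * Real.log (s.choose k)))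
                ≤ Real.exp (-Real.log (s.choose k)) := Real.exp_le_exp.mpr h5
              _ = ((s.choose k : ℝ))⁻¹ := by rw [Real.exp_neg, Real.exp_log hCpos]
          have hB1 : Real.exp (-(c * (k:ℝ))) = q ^ k := by
            rw [hqdef, ← Real.exp_nat_mul]
            congr 1
            ring
          rw [hB1]
          exact mul_le_mul_of_nonneg_left
            (mul_le_mul_of_nonneg_right hA1 (by positivity)) (by norm_num)
      _ = 2 * ((s.choose k : ℝ))⁻¹ * q ^ k := by ring
  have hreal : ∑ A ∈ S, 2 * Real.exp (-(c * LFn n p x T s (T \ A).card)) ≤ ε := by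
    have hsum1 : ∑ A ∈ S, 2 * Real.exp (-(c * LFn n p x T s (T \ A).card))
        ≤ ∑ A ∈ S, (if (T \ A).card = 0 then 0
          else 2 * ((s.choose (T \ A).card : ℝ))⁻¹ * q ^ (T \ A).card) :=
      Finset.sum_le_sum hper
    have hsum2 : ∑ A ∈ S, (if (T \ A).card = 0 then 0
          else 2 * ((s.choose (T \ A).card : ℝ))⁻¹ * q ^ (T \ A).card)
        ≤ ∑ A ∈ T.powerset, (if (T \ A).card = 0 then 0
          else 2 * ((s.choose (T \ A).card : ℝ))⁻¹ * q ^ (T \ A).card) := by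
      refine Finset.sum_le_sum_of_subset_of_nonneg (by rw [hSdef]; exact Finset.filter_subset _ _)
        (fun A _ _ => ?_)
      by_cases h0 : (T \ A).card = 0
      · simp [h0]
      · rw [if_neg h0]
        positivity
    have hsum3 : ∑ A ∈ T.powerset, (if (T \ A).card = 0 then 0
          else 2 * ((s.choose (T \ A).card : ℝ))⁻¹ * q ^ (T \ A).card) ≤ 4 * q := by
      rw [hs]
      exact sum_powerset_bound T q hq0 hq1
    have h4q : 4 * q ≤ ε := by
      rw [hqdef, hc]
      exact four_q_le ε hε
    exact le_trans hsum1 (le_trans hsum2 (le_trans hsum3 h4q))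
  have hPU : P U ≤ ENNReal.ofReal ε := by
    calc P U ≤ ∑ A ∈ S, P (BadSet n p x β0 T s K σ e A) :=
          measure_biUnion_finset_le S _
      _ ≤ ∑ A ∈ S, ENNReal.ofReal (2 * Real.exp (-(c * LFn n p x T s (T \ A).card))) :=
          Finset.sum_le_sum hprob
      _ = ENNReal.ofReal (∑ A ∈ S, 2 * Real.exp (-(c * LFn n p x T s (T \ A).card))) :=
          (ENNReal.ofReal_sum_of_nonneg (fun A _ => by positivity)).symm
      _ ≤ ENNReal.ofReal ε := ENNReal.ofReal_le_ofReal hreal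
  -- the good event contains the complement of U
  have hsubset : Uᶜ ⊆ {ω | ∀ k : ℕ, k ≤ s → ∀ Ttil : Finset (Fin p), Ttil ⊆ T →
      (T \ Ttil).card = k →
      |Qls n p x (fun i => f i + e i ω) (restr Ttil β0) -
          Qls n p x (fun i => f i + e i ω) β0 -
          predNorm n p x (restr Ttilᶜ β0) ^ 2| ≤
        K * σ * Real.sqrt ((Real.log (Nat.choose s k) +
            k * Real.log (Real.exp 1 * muCond n p x T 0)) / n) *
          predNorm n p x (restr Ttilᶜ β0) +
          2 * cs * predNorm n p x (restr Ttilᶜ β0)} := by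
    intro ω hω
    have hω' : ∀ A ∈ S, ω ∉ BadSet n p x β0 T s K σ e A := by
      intro A hA hmem
      exact hω (Set.mem_biUnion hA hmem)
    intro k hk Ttil hTsub hTcard
    subst hTcard
    rw [Q_identity n p x (fun i => f i + e i ω) β0 Ttil]
    have hXY : 2 * (n:ℝ)⁻¹ * ∑ i, (f i + e i ω - ∑ j, x i j * β0 j)
          * (∑ j, x i j * restr Ttilᶜ β0 j)
        = 2 * (n:ℝ)⁻¹ * ∑ i, (f i - ∑ j, x i j * β0 j) * aFn n p x β0 Ttil i
          + ∑ i, bFn n p x β0 Ttil i * e i ω := by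
      simp only [bFn, aFn]
      rw [Finset.mul_sum, Finset.mul_sum, ← Finset.sum_add_distrib]
      exact Finset.sum_congr rfl fun i _ => by ring
    rw [hXY]
    have hcsb : |2 * (n:ℝ)⁻¹ * ∑ i, (f i - ∑ j, x i j * β0 j) * aFn n p x β0 Ttil i|
        ≤ 2 * cs * predNorm n p x (restr Ttilᶜ β0) := by
      have h1 := cs_bound n (fun i => f i - ∑ j, x i j * β0 j) (aFn n p x β0 Ttil)
      have h2 : Real.sqrt ((n:ℝ)⁻¹ * ∑ i, (f i - ∑ j, x i j * β0 j) ^ 2) = cs := hcs.symm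
      have h3 : Real.sqrt ((n:ℝ)⁻¹ * ∑ i, aFn n p x β0 Ttil i ^ 2)
          = predNorm n p x (restr Ttilᶜ β0) := rfl
      rw [h2, h3] at h1
      exact h1
    by_cases hcase : 0 < ∑ i, aFn n p x β0 Ttil i ^ 2
    · have hmem : Ttil ∈ S := by
        rw [hSdef]
        exact Finset.mem_filter.mpr ⟨Finset.mem_powerset.mpr hTsub, hcase⟩
      have hnb := hω' Ttil hmem
      have hY : |∑ i, bFn n p x β0 Ttil i * e i ω| ≤ thrFn n p x β0 T s K σ Ttil := by
        by_contra hcon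
        push_neg at hcon
        exact hnb hcon.le
      have hthr_eq : thrFn n p x β0 T s K σ Ttil
          = K * σ * Real.sqrt ((Real.log (Nat.choose s (T \ Ttil).card) +
              ((T \ Ttil).card : ℝ) * Real.log (Real.exp 1 * muCond n p x T 0)) / n) *
            predNorm n p x (restr Ttilᶜ β0) := rfl
      calc |2 * (n:ℝ)⁻¹ * ∑ i, (f i - ∑ j, x i j * β0 j) * aFn n p x β0 Ttil i
            + ∑ i, bFn n p x β0 Ttil i * e i ω|
          ≤ |2 * (n:ℝ)⁻¹ * ∑ i, (f i - ∑ j, x i j * β0 j) * aFn n p x β0 Ttil i|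
            + |∑ i, bFn n p x β0 Ttil i * e i ω| := abs_add_le _ _
        _ ≤ 2 * cs * predNorm n p x (restr Ttilᶜ β0) + thrFn n p x β0 T s K σ Ttil :=
            add_le_add hcsb hY
        _ = K * σ * Real.sqrt ((Real.log (Nat.choose s (T \ Ttil).card) +
              ((T \ Ttil).card : ℝ) * Real.log (Real.exp 1 * muCond n p x T 0)) / n) *
            predNorm n p x (restr Ttilᶜ β0) +
            2 * cs * predNorm n p x (restr Ttilᶜ β0) := by rw [hthr_eq]; ring
    · have h0 : ∑ i, aFn n p x β0 Ttil i ^ 2 = 0 :=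
        le_antisymm (not_lt.mp hcase) (Finset.sum_nonneg fun i _ => sq_nonneg _)
      have hai : ∀ i, aFn n p x β0 Ttil i = 0 := by
        intro i
        have h5 := (Finset.sum_eq_zero_iff_of_nonneg
          (fun i _ => sq_nonneg (aFn n p x β0 Ttil i))).mp h0 i (Finset.mem_univ i)
        exact (pow_eq_zero_iff two_ne_zero).mp h5
      have hpred0 : predNorm n p x (restr Ttilᶜ β0) = 0 := by
        have h3 : predNorm n p x (restr Ttilᶜ β0)
            = Real.sqrt ((n:ℝ)⁻¹ * ∑ i, aFn n p x β0 Ttil i ^ 2) := rfl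
        rw [h3, h0, mul_zero, Real.sqrt_zero]
      have hX0 : ∑ i, (f i - ∑ j, x i j * β0 j) * aFn n p x β0 Ttil i = 0 :=
        Finset.sum_eq_zero fun i _ => by rw [hai i, mul_zero]
      have hY0 : ∑ i, bFn n p x β0 Ttil i * e i ω = 0 :=
        Finset.sum_eq_zero fun i _ => by rw [bFn, hai i]; ring
      rw [hX0, hY0, mul_zero, add_zero, abs_zero, hpred0]
      simp
  calc ENNReal.ofReal (1 - ε) = 1 - ENNReal.ofReal ε := by
        rw [ENNReal.ofReal_sub 1 hε.le, ENNReal.ofReal_one]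
    _ ≤ 1 - P U := tsub_le_tsub_left hPU 1
    _ = P Uᶜ := (prob_compl_eq_one_sub hUmeas).symm
    _ ≤ P _ := measure_mono hsubset
end
end
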